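/- (Lemma 4, optimal Q for fixed P in the multiterminal problem, with KL decomposition.) Fix β=(s₁,s₂,α) with s₁,s₂>0, α∈[0,1], ᾱ:=1−α, and let P be a test-channel pair. For every auxiliary tuple Q with strictly positive components, F_β(P,Q) − F_β(P) = α Σ_{u₁,u₂} p(u₁,u₂) D_KL(p(y₁ given (u₁,u₂)) ‖ q(y₁|u₁,u₂)) + ᾱ Σ_{u₁,u₂} p(u₁,u₂) D_KL(p(y₂ given (u₁,u₂)) ‖ q(y₂|u₁,u₂)) + s₁ D_KL(p(u₁,u₂) ‖ q(u₁,u₂)) + s₂ D_KL(p(u₂) ‖ q(u₂)) ≥ 0; consequently inf_Q F_β(P,Q) = F_β(P), attained at Q* given by the induced conditionals and marginals q*(y₁|u₁,u₂)=p(y₁|u₁,u₂), q*(y₂|u₁,u₂)=p(y₂|u₁,u₂) (whenever p(u₁,u₂)>0), q*(u₁,u₂)=p(u₁,u₂), q*(u₂)=p(u₂), and at no other Q agreeing with P's support in the sense that equality forces Q to coincide with Q* wherever the corresponding induced probabilities are positive. -/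

import Mathlib

open Finset Real

noncomputable section

/-- Shannon entropy of a finitely supported nonnegative vector,
with the convention `0 · log 0 = 0` (natural logarithm). -/
def ent {α : Type} [Fintype α] (p : α → ℝ) : ℝ := ∑ a, Real.negMulLog (p a)

/-- `p` is a probability mass function on the finite alphabet `α`. -/
def IsPmf {α : Type} [Fintype α] (p : α → ℝ) : Prop := (∀ a, 0 ≤ p a) ∧ ∑ a, p a = 1

/-- `w` is a conditional pmf (channel) from `α` to `β`. -/
def IsChan {α β : Type} [Fintype α] [Fintype β] (w : α → β → ℝ) : Prop := ∀ a, IsPmf (w a)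

/-- Kullback–Leibler divergence between two vectors on a finite alphabet
(convention `0 · log (0/q) = 0` is automatic since the coefficient vanishes). -/
def KL {α : Type} [Fintype α] (r q : α → ℝ) : ℝ := ∑ a, r a * Real.log (r a / q a)

/-- The extended-real value of a term `−a · log q`: it is `+∞` if `a > 0` and `q = 0`. -/
def nlogE (a q : ℝ) : EReal := if 0 < a ∧ q = 0 then ⊤ else ((-(a * Real.log q) : ℝ) : EReal)

variable {Y1 Y2 U1 U2 : Type} [Fintype Y1] [Fintype Y2] [Fintype U1] [Fintype U2]

/-- The joint pmf `p(y₁,y₂,u₁,u₂) = p(y₁,y₂)p(u₁|y₁)p(u₂|y₂)` induced by the source `pY`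
and a test-channel pair `(p1, p2)`. -/
def btJoint (pY : Y1 × Y2 → ℝ) (p1 : Y1 → U1 → ℝ) (p2 : Y2 → U2 → ℝ) :
    Y1 × Y2 × U1 × U2 → ℝ :=
  fun z => pY (z.1, z.2.1) * p1 z.1 z.2.2.1 * p2 z.2.1 z.2.2.2

/-- Marginal `p(y₁,u₁,u₂)`. -/
def bY1U (j : Y1 × Y2 × U1 × U2 → ℝ) : Y1 × U1 × U2 → ℝ :=
  fun z => ∑ y2, j (z.1, y2, z.2.1, z.2.2)

/-- Marginal `p(y₂,u₁,u₂)`. -/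
def bY2U (j : Y1 × Y2 × U1 × U2 → ℝ) : Y2 × U1 × U2 → ℝ :=
  fun z => ∑ y1, j (y1, z.1, z.2.1, z.2.2)

/-- Marginal `p(u₁,u₂)`. -/
def bU12 (j : Y1 × Y2 × U1 × U2 → ℝ) : U1 × U2 → ℝ :=
  fun u => ∑ y1, bY1U j (y1, u.1, u.2)

/-- Marginal `p(u₂)`. -/
def bU2 (j : Y1 × Y2 × U1 × U2 → ℝ) : U2 → ℝ := fun u2 => ∑ u1, bU12 j (u1, u2)

/-- Marginal `p(u₁)`. -/
def bU1 (j : Y1 × Y2 × U1 × U2 → ℝ) : U1 → ℝ := fun u1 => ∑ u2, bU12 j (u1, u2)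

/-- Marginal `p(y₁,u₂)`. -/
def bY1U2 (j : Y1 × Y2 × U1 × U2 → ℝ) : Y1 × U2 → ℝ :=
  fun z => ∑ u1, bY1U j (z.1, u1, z.2)

/-- Marginal `p(y₂,u₂)`. -/
def bY2U2 (j : Y1 × Y2 × U1 × U2 → ℝ) : Y2 × U2 → ℝ :=
  fun z => ∑ u1, bY2U j (z.1, u1, z.2)

/-- Marginal `p(y₂,u₁)`. -/
def bY2U1 (j : Y1 × Y2 × U1 × U2 → ℝ) : Y2 × U1 → ℝ :=
  fun z => ∑ u2, bY2U j (z.1, z.2, u2)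

/-- Marginal `p(y₁,u₁)`. -/
def bY1U1 (j : Y1 × Y2 × U1 × U2 → ℝ) : Y1 × U1 → ℝ :=
  fun z => ∑ u2, bY1U j (z.1, z.2, u2)

/-- Marginal `p(y₁)`. -/
def bY1 (j : Y1 × Y2 × U1 × U2 → ℝ) : Y1 → ℝ := fun y1 => ∑ u2, bY1U2 j (y1, u2)

/-- Marginal `p(y₂)`. -/
def bY2 (j : Y1 × Y2 × U1 × U2 → ℝ) : Y2 → ℝ := fun y2 => ∑ u2, bY2U2 j (y2, u2)

/-- Conditional entropy `H(Y₁|U₁,U₂)`. -/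
def bH1 (j : Y1 × Y2 × U1 × U2 → ℝ) : ℝ := ent (bY1U j) - ent (bU12 j)

/-- Conditional entropy `H(Y₂|U₁,U₂)`. -/
def bH2 (j : Y1 × Y2 × U1 × U2 → ℝ) : ℝ := ent (bY2U j) - ent (bU12 j)

/-- Conditional mutual information `I(Y₁;U₁|U₂)`. -/
def bI1c (j : Y1 × Y2 × U1 × U2 → ℝ) : ℝ :=
  ent (bY1U2 j) + ent (bU12 j) - ent (bU2 j) - ent (bY1U j)

/-- Mutual information `I(Y₂;U₂)`. -/
def bI2m (j : Y1 × Y2 × U1 × U2 → ℝ) : ℝ := ent (bY2 j) + ent (bU2 j) - ent (bY2U2 j)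

/-- Conditional mutual information `I(Y₂;U₂|U₁)`. -/
def bI2c (j : Y1 × Y2 × U1 × U2 → ℝ) : ℝ :=
  ent (bY2U1 j) + ent (bU12 j) - ent (bU1 j) - ent (bY2U j)

/-- Mutual information `I(Y₁;U₁)`. -/
def bI1m (j : Y1 × Y2 × U1 × U2 → ℝ) : ℝ := ent (bY1 j) + ent (bU1 j) - ent (bY1U1 j)

/-- The functional
`F_β(P) = α H(Y₁|U₁,U₂) + (1−α) H(Y₂|U₁,U₂) + s₁ I(Y₁;U₁|U₂) + s₂ I(Y₂;U₂)`. -/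
def Fb (s1 s2 a : ℝ) (j : Y1 × Y2 × U1 × U2 → ℝ) : ℝ :=
  a * bH1 j + (1 - a) * bH2 j + s1 * bI1c j + s2 * bI2m j

/-- `D¹_{BT,α}(R₁,R₂)`: the minimal `α H(Y₁|U₁,U₂) + (1−α) H(Y₂|U₁,U₂)` over test-channel
pairs into `V1`, `V2`, subject to `I(Y₁;U₁|U₂) ≤ R₁` and `I(Y₂;U₂) ≤ R₂`. -/
def Dbt1 (V1 V2 : Type) [Fintype V1] [Fintype V2]
    (pY : Y1 × Y2 → ℝ) (a R1 R2 : ℝ) : ℝ :=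
  sInf {d : ℝ | ∃ p1 : Y1 → V1 → ℝ, ∃ p2 : Y2 → V2 → ℝ, IsChan p1 ∧ IsChan p2 ∧
    bI1c (btJoint pY p1 p2) ≤ R1 ∧ bI2m (btJoint pY p1 p2) ≤ R2 ∧
    d = a * bH1 (btJoint pY p1 p2) + (1 - a) * bH2 (btJoint pY p1 p2)}

/-- `D²_{BT,α}(R₁,R₂)`: the minimal `α H(Y₁|U₁,U₂) + (1−α) H(Y₂|U₁,U₂)` subject to
`I(Y₂;U₂|U₁) ≤ R₂` and `I(Y₁;U₁) ≤ R₁`. -/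
def Dbt2 (V1 V2 : Type) [Fintype V1] [Fintype V2]
    (pY : Y1 × Y2 → ℝ) (a R1 R2 : ℝ) : ℝ :=
  sInf {d : ℝ | ∃ p1 : Y1 → V1 → ℝ, ∃ p2 : Y2 → V2 → ℝ, IsChan p1 ∧ IsChan p2 ∧
    bI2c (btJoint pY p1 p2) ≤ R2 ∧ bI1m (btJoint pY p1 p2) ≤ R1 ∧
    d = a * bH1 (btJoint pY p1 p2) + (1 - a) * bH2 (btJoint pY p1 p2)}

/-- Source marginal `p(y₁)`. -/
def bpY1 (pY : Y1 × Y2 → ℝ) : Y1 → ℝ := fun y1 => ∑ y2, pY (y1, y2)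

/-- Source marginal `p(y₂)`. -/
def bpY2 (pY : Y1 × Y2 → ℝ) : Y2 → ℝ := fun y2 => ∑ y1, pY (y1, y2)

/-- Induced marginal `p(u₂) = Σ_{y₂} p(y₂) p(u₂|y₂)`. -/
def bpU2m (pY : Y1 × Y2 → ℝ) (p2 : Y2 → U2 → ℝ) : U2 → ℝ :=
  fun u2 => ∑ y2, bpY2 pY y2 * p2 y2 u2

/-- Induced joint `p(u₁,u₂,y₁) = Σ_{y₂} p(y₁,y₂) p(u₁|y₁) p(u₂|y₂)`. -/
def bpUUY1 (pY : Y1 × Y2 → ℝ) (p1 : Y1 → U1 → ℝ) (p2 : Y2 → U2 → ℝ) :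
    U1 × U2 × Y1 → ℝ :=
  fun z => ∑ y2, pY (z.2.2, y2) * p1 z.2.2 z.1 * p2 y2 z.2.1

/-- Induced joint `p(u₁,u₂,y₂) = Σ_{y₁} p(y₁,y₂) p(u₁|y₁) p(u₂|y₂)`. -/
def bpUUY2 (pY : Y1 × Y2 → ℝ) (p1 : Y1 → U1 → ℝ) (p2 : Y2 → U2 → ℝ) :
    U1 × U2 × Y2 → ℝ :=
  fun z => ∑ y1, pY (y1, z.2.2) * p1 y1 z.1 * p2 z.2.2 z.2.1

/-- Induced marginal `p(u₁,u₂)`. -/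
def bpUU (pY : Y1 × Y2 → ℝ) (p1 : Y1 → U1 → ℝ) (p2 : Y2 → U2 → ℝ) : U1 × U2 → ℝ :=
  fun u => ∑ y1, bpUUY1 pY p1 p2 (u.1, u.2, y1)

/-- The multiterminal Blahut–Arimoto functional `F_β(P,Q)` (real-valued version;
the convention `0 · log 0 = 0` is automatic since vanishing coefficients kill terms). -/
def FbPQ (s1 s2 a : ℝ) (pY : Y1 × Y2 → ℝ) (p1 : Y1 → U1 → ℝ) (p2 : Y2 → U2 → ℝ)
    (qY1 : U1 × U2 → Y1 → ℝ) (qY2 : U1 × U2 → Y2 → ℝ)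
    (qUU : U1 × U2 → ℝ) (qU2 : U2 → ℝ) : ℝ :=
  s1 * (∑ u1, ∑ y1, p1 y1 u1 * bpY1 pY y1 * Real.log (p1 y1 u1))
  + s2 * (∑ u2, ∑ y2, p2 y2 u2 * bpY2 pY y2 * Real.log (p2 y2 u2))
  + s1 * (∑ u2, bpU2m pY p2 u2 * Real.log (bpU2m pY p2 u2))
  - s2 * (∑ u2, bpU2m pY p2 u2 * Real.log (qU2 u2))
  - a * (∑ u1, ∑ u2, ∑ y1, bpUUY1 pY p1 p2 (u1, u2, y1) * Real.log (qY1 (u1, u2) y1))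
  - (1 - a) * (∑ u1, ∑ u2, ∑ y2, bpUUY2 pY p1 p2 (u1, u2, y2) * Real.log (qY2 (u1, u2) y2))
  - s1 * (∑ u1, ∑ u2, bpUU pY p1 p2 (u1, u2) * Real.log (qUU (u1, u2)))

/-- The multiterminal Blahut–Arimoto functional `F_β(P,Q)`, with values in `ℝ ∪ {+∞}`
(a term `−a log q` with positive coefficient and `q = 0` is `+∞`). -/
def FbPQE (s1 s2 a : ℝ) (pY : Y1 × Y2 → ℝ) (p1 : Y1 → U1 → ℝ) (p2 : Y2 → U2 → ℝ)
    (qY1 : U1 × U2 → Y1 → ℝ) (qY2 : U1 × U2 → Y2 → ℝ)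
    (qUU : U1 × U2 → ℝ) (qU2 : U2 → ℝ) : EReal :=
  ((s1 * (∑ u1, ∑ y1, p1 y1 u1 * bpY1 pY y1 * Real.log (p1 y1 u1))
    + s2 * (∑ u2, ∑ y2, p2 y2 u2 * bpY2 pY y2 * Real.log (p2 y2 u2))
    + s1 * (∑ u2, bpU2m pY p2 u2 * Real.log (bpU2m pY p2 u2)) : ℝ) : EReal)
  + (∑ u2, nlogE (s2 * bpU2m pY p2 u2) (qU2 u2))
  + (∑ u1, ∑ u2, ∑ y1, nlogE (a * bpUUY1 pY p1 p2 (u1, u2, y1)) (qY1 (u1, u2) y1))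
  + (∑ u1, ∑ u2, ∑ y2, nlogE ((1 - a) * bpUUY2 pY p1 p2 (u1, u2, y2)) (qY2 (u1, u2) y2))
  + (∑ u1, ∑ u2, nlogE (s1 * bpUU pY p1 p2 (u1, u2)) (qUU (u1, u2)))

/-- **Lemma 4** (optimal `Q` for fixed `P` in the multiterminal problem, with KL
decomposition): for strictly positive `Q`,
`F_β(P,Q) − F_β(P)` is the stated nonnegative combination of KL divergences; consequently
`inf_Q F_β(P,Q) = F_β(P)`, attained at the `Q*` induced by `P`, and equality forces `Q` to
coincide with `Q*` wherever the corresponding induced probabilities are positive. -/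
lemma gibbs_term_ge {r q : ℝ} (hr : 0 ≤ r) (hq : 0 ≤ q) (h : 0 < r → 0 < q) :
    r - q ≤ r * Real.log (r / q) := by
  rcases hr.eq_or_lt with h0 | h0
  · simp only [← h0, zero_mul, zero_sub]; linarith
  · have hq' := h h0
    have hlog : Real.log (q / r) ≤ q / r - 1 := Real.log_le_sub_one_of_pos (div_pos hq' h0)
    have hrl : Real.log (r / q) = - Real.log (q / r) := by
      rw [← Real.log_inv]; congr 1; rw [inv_div]
    have h2 : r * Real.log (q / r) ≤ r * (q / r - 1) := mul_le_mul_of_nonneg_left hlog h0.le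
    have h3 : r * (q / r - 1) = q - r := by field_simp
    rw [hrl]; nlinarith
  
lemma gibbs_term_eq {r q : ℝ} (hr : 0 < r) (hq : 0 < q) (h : r * Real.log (r / q) = r - q) :
    q = r := by
  by_contra hne
  have hx : q / r ≠ 1 := by
    intro h1; exact hne (by field_simp at h1; linarith)
  have hlog : Real.log (q / r) < q / r - 1 := Real.log_lt_sub_one_of_pos (div_pos hq hr) hx
  have hrl : Real.log (r / q) = - Real.log (q / r) := by
    rw [← Real.log_inv]; congr 1; rw [inv_div]
  rw [hrl] at h
  have h2 : r * Real.log (q / r) < r * (q / r - 1) := by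
    exact mul_lt_mul_of_pos_left hlog hr
  have h3 : r * (q / r - 1) = q - r := by field_simp
  nlinarith

lemma KL_nonneg {α : Type} [Fintype α] {r q : α → ℝ} (hr : ∀ a, 0 ≤ r a) (hq : ∀ a, 0 ≤ q a)
    (hsum : ∑ a, q a ≤ ∑ a, r a) (hsupp : ∀ a, 0 < r a → 0 < q a) : 0 ≤ KL r q := by
  have : ∑ a, (r a - q a) ≤ KL r q := by
    apply Finset.sum_le_sum
    intro a _
    exact gibbs_term_ge (hr a) (hq a) (hsupp a)
  rw [Finset.sum_sub_distrib] at this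
  linarith

lemma KL_eq_zero {α : Type} [Fintype α] {r q : α → ℝ} (hr : ∀ a, 0 ≤ r a) (hq : ∀ a, 0 ≤ q a)
    (hrsum : ∑ a, r a = 1) (hqsum : ∑ a, q a = 1) (hsupp : ∀ a, 0 < r a → 0 < q a)
    (h : KL r q = 0) : ∀ a, 0 < r a → q a = r a := by
  have hterm : ∀ a ∈ Finset.univ (α := α),
      0 ≤ r a * Real.log (r a / q a) - (r a - q a) := by
    intro a _; have := gibbs_term_ge (hr a) (hq a) (hsupp a); linarith
  have hsum0 : ∑ a, (r a * Real.log (r a / q a) - (r a - q a)) = 0 := by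
    rw [Finset.sum_sub_distrib, Finset.sum_sub_distrib]
    unfold KL at h
    rw [h, hrsum, hqsum]; ring
  have heach := (Finset.sum_eq_zero_iff_of_nonneg hterm).mp hsum0
  intro a ha
  have := heach a (Finset.mem_univ a)
  exact gibbs_term_eq ha (hsupp a ha) (by linarith)

lemma ereal_coe_sum {ι : Type*} (s : Finset ι) (f : ι → ℝ) :
    ((∑ i ∈ s, f i : ℝ) : EReal) = ∑ i ∈ s, (f i : EReal) :=
  map_sum (⟨⟨Real.toEReal, EReal.coe_zero⟩, EReal.coe_add⟩ : ℝ →+ EReal) f s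

lemma ereal_sum_ne_bot {ι : Type*} (s : Finset ι) (f : ι → EReal) (h : ∀ i ∈ s, f i ≠ ⊥) :
    ∑ i ∈ s, f i ≠ ⊥ := by
  classical
  induction s using Finset.induction with
  | empty => simp
  | @insert a s' hx ih =>
    rw [Finset.sum_insert hx]
    rw [Ne, EReal.add_eq_bot_iff]
    push_neg
    exact ⟨h a (Finset.mem_insert_self a s'), ih fun i hi => h i (Finset.mem_insert_of_mem hi)⟩

lemma ereal_sum_eq_top {ι : Type*} (s : Finset ι) (f : ι → EReal) (h : ∀ i ∈ s, f i ≠ ⊥)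
    {i0 : ι} (hi0 : i0 ∈ s) (htop : f i0 = ⊤) : ∑ i ∈ s, f i = ⊤ := by
  classical
  rw [← Finset.add_sum_erase s f hi0, htop]
  exact EReal.top_add_of_ne_bot (ereal_sum_ne_bot _ _ fun i hi => h i (Finset.mem_erase.mp hi).2)

lemma nlogE_ne_bot (a q : ℝ) : nlogE a q ≠ ⊥ := by
  unfold nlogE; split
  · simp
  · exact EReal.coe_ne_bot _

lemma nlogE_eq_coe {a q : ℝ} (h : ¬(0 < a ∧ q = 0)) :
    nlogE a q = ((-(a * Real.log q) : ℝ) : EReal) := by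
  unfold nlogE; rw [if_neg h]

lemma split1 (x w : ℝ) : w * x * Real.log w + Real.negMulLog (x * w) = w * Real.negMulLog x := by
  have := Real.negMulLog_mul x w
  unfold Real.negMulLog at *
  nlinarith [this]

set_option linter.unusedSectionVars false
set_option linter.unusedVariables false

section Marg
variable (pY : Y1 × Y2 → ℝ) (p1 : Y1 → U1 → ℝ) (p2 : Y2 → U2 → ℝ)

/-- auxiliary marginal `m(y₁,u₂) = Σ_{y₂} p(y₁,y₂) p(u₂|y₂)`. -/
def mAux : Y1 → U2 → ℝ := fun y1 u2 => ∑ y2, pY (y1, y2) * p2 y2 u2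

lemma F1fact : ∀ u1 u2 y1, bpUUY1 pY p1 p2 (u1, u2, y1) = p1 y1 u1 * mAux pY p2 y1 u2 := by
  intro u1 u2 y1
  unfold bpUUY1 mAux
  rw [Finset.mul_sum]
  exact Finset.sum_congr rfl fun y2 _ => by ring

variable (hpY : IsPmf pY) (hp1 : IsChan p1) (hp2 : IsChan p2)

lemma margP2fact : ∀ u1 u2, ∑ y2, bpUUY2 pY p1 p2 (u1, u2, y2) = bpUU pY p1 p2 (u1, u2) := by
  intro u1 u2
  unfold bpUUY2 bpUU bpUUY1
  exact Finset.sum_comm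

lemma sum_mAux (hp2 : IsChan p2) : ∀ y1, ∑ u2, mAux pY p2 y1 u2 = bpY1 pY y1 := by
  intro y1
  unfold mAux bpY1
  rw [Finset.sum_comm]
  exact Finset.sum_congr rfl fun y2 _ => by rw [← Finset.mul_sum, (hp2 y2).2, mul_one]

lemma margPUfact (hp1 : IsChan p1) :
    ∀ u2, ∑ u1, bpUU pY p1 p2 (u1, u2) = bpU2m pY p2 u2 := by
  intro u2
  have key : ∀ y1 y2, ∑ u1, pY (y1, y2) * p1 y1 u1 * p2 y2 u2
      = pY (y1, y2) * p2 y2 u2 := by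
    intro y1 y2
    have h : ∑ u1, pY (y1, y2) * p1 y1 u1 * p2 y2 u2
        = (∑ u1, p1 y1 u1) * (pY (y1, y2) * p2 y2 u2) := by
      rw [Finset.sum_mul]; exact Finset.sum_congr rfl fun u1 _ => by ring
    rw [h, (hp1 y1).2, one_mul]
  unfold bpUU bpUUY1 bpU2m bpY2
  calc ∑ u1, ∑ y1, ∑ y2, pY (y1, y2) * p1 y1 u1 * p2 y2 u2
      = ∑ y1, ∑ y2, ∑ u1, pY (y1, y2) * p1 y1 u1 * p2 y2 u2 := by
        rw [Finset.sum_comm]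
        exact Finset.sum_congr rfl fun y1 _ => Finset.sum_comm
    _ = ∑ y1, ∑ y2, pY (y1, y2) * p2 y2 u2 :=
        Finset.sum_congr rfl fun y1 _ => Finset.sum_congr rfl fun y2 _ => key y1 y2
    _ = ∑ y2, (∑ y1, pY (y1, y2)) * p2 y2 u2 := by
        rw [Finset.sum_comm]
        exact Finset.sum_congr rfl fun y2 _ => (Finset.sum_mul _ _ _).symm

lemma bpUUY1_nn (hpY : IsPmf pY) (hp1 : IsChan p1) (hp2 : IsChan p2) :
    ∀ z, 0 ≤ bpUUY1 pY p1 p2 z := fun z =>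
  Finset.sum_nonneg fun y2 _ => mul_nonneg (mul_nonneg (hpY.1 _) ((hp1 _).1 _)) ((hp2 _).1 _)

lemma bpUUY2_nn (hpY : IsPmf pY) (hp1 : IsChan p1) (hp2 : IsChan p2) :
    ∀ z, 0 ≤ bpUUY2 pY p1 p2 z := fun z =>
  Finset.sum_nonneg fun y1 _ => mul_nonneg (mul_nonneg (hpY.1 _) ((hp1 _).1 _)) ((hp2 _).1 _)

lemma bpUU_nn (hpY : IsPmf pY) (hp1 : IsChan p1) (hp2 : IsChan p2) :
    ∀ u, 0 ≤ bpUU pY p1 p2 u := fun u =>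
  Finset.sum_nonneg fun y1 _ => bpUUY1_nn pY p1 p2 hpY hp1 hp2 _

lemma bpY2_nn (hpY : IsPmf pY) : ∀ y2, 0 ≤ bpY2 pY y2 := fun y2 =>
  Finset.sum_nonneg fun y1 _ => hpY.1 _

lemma bpY1_nn (hpY : IsPmf pY) : ∀ y1, 0 ≤ bpY1 pY y1 := fun y1 =>
  Finset.sum_nonneg fun y2 _ => hpY.1 _

lemma bpU2m_nn (hpY : IsPmf pY) (hp2 : IsChan p2) : ∀ u2, 0 ≤ bpU2m pY p2 u2 := fun u2 =>
  Finset.sum_nonneg fun y2 _ => mul_nonneg (bpY2_nn pY hpY _) ((hp2 _).1 _)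

lemma mAux_nn (hpY : IsPmf pY) (hp2 : IsChan p2) : ∀ y1 u2, 0 ≤ mAux pY p2 y1 u2 :=
  fun y1 u2 => Finset.sum_nonneg fun y2 _ => mul_nonneg (hpY.1 _) ((hp2 _).1 _)

lemma bpY1_pmf (hpY : IsPmf pY) : IsPmf (bpY1 pY) := by
  refine ⟨bpY1_nn pY hpY, ?_⟩
  rw [← hpY.2]
  rw [show (∑ z : Y1 × Y2, pY z) = ∑ y1, ∑ y2, pY (y1, y2) from Fintype.sum_prod_type _]
  rfl

lemma bpY2_pmf (hpY : IsPmf pY) : IsPmf (bpY2 pY) := by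
  refine ⟨bpY2_nn pY hpY, ?_⟩
  rw [← hpY.2]
  rw [show (∑ z : Y1 × Y2, pY z) = ∑ y1, ∑ y2, pY (y1, y2) from Fintype.sum_prod_type _]
  exact Finset.sum_comm

lemma bpU2m_pmf (hpY : IsPmf pY) (hp2 : IsChan p2) : IsPmf (bpU2m pY p2) := by
  refine ⟨bpU2m_nn pY p2 hpY hp2, ?_⟩
  unfold bpU2m
  rw [Finset.sum_comm]
  have : ∀ y2, ∑ u2, bpY2 pY y2 * p2 y2 u2 = bpY2 pY y2 := fun y2 => by
    rw [← Finset.mul_sum, (hp2 y2).2, mul_one]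
  rw [Finset.sum_congr rfl fun y2 _ => this y2]
  exact (bpY2_pmf pY hpY).2

lemma bpUU_pmf (hpY : IsPmf pY) (hp1 : IsChan p1) (hp2 : IsChan p2) :
    IsPmf (bpUU pY p1 p2) := by
  refine ⟨bpUU_nn pY p1 p2 hpY hp1 hp2, ?_⟩
  rw [show (∑ u : U1 × U2, bpUU pY p1 p2 u) = ∑ u1, ∑ u2, bpUU pY p1 p2 (u1, u2) from
    Fintype.sum_prod_type _]
  rw [Finset.sum_comm]
  rw [Finset.sum_congr rfl fun u2 _ => margPUfact pY p1 p2 hp1 u2]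
  exact (bpU2m_pmf pY p2 hpY hp2).2

lemma bY1U2fact (hp1 : IsChan p1) :
    ∀ y1 u2, bY1U2 (btJoint pY p1 p2) (y1, u2) = mAux pY p2 y1 u2 := by
  intro y1 u2
  show ∑ u1, bpUUY1 pY p1 p2 (u1, u2, y1) = _
  rw [Finset.sum_congr rfl fun u1 _ => F1fact pY p1 p2 u1 u2 y1, ← Finset.sum_mul,
    (hp1 y1).2, one_mul]

lemma bY2U2fact (hp1 : IsChan p1) :
    ∀ y2 u2, bY2U2 (btJoint pY p1 p2) (y2, u2) = bpY2 pY y2 * p2 y2 u2 := by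
  intro y2 u2
  show ∑ u1, bpUUY2 pY p1 p2 (u1, u2, y2) = _
  unfold bpUUY2 bpY2
  rw [Finset.sum_comm, Finset.sum_mul]
  refine Finset.sum_congr rfl fun y1 _ => ?_
  have h : ∑ u1, pY (y1, y2) * p1 y1 u1 * p2 y2 u2
      = (∑ u1, p1 y1 u1) * (pY (y1, y2) * p2 y2 u2) := by
    rw [Finset.sum_mul]; exact Finset.sum_congr rfl fun u1 _ => by ring
  rw [h, (hp1 y1).2, one_mul]

lemma bY2fact (hp1 : IsChan p1) (hp2 : IsChan p2) :
    ∀ y2, bY2 (btJoint pY p1 p2) y2 = bpY2 pY y2 := by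
  intro y2
  show ∑ u2, bY2U2 (btJoint pY p1 p2) (y2, u2) = _
  rw [Finset.sum_congr rfl fun u2 _ => bY2U2fact pY p1 p2 hp1 y2 u2, ← Finset.mul_sum,
    (hp2 y2).2, mul_one]

lemma bU2fact (hp1 : IsChan p1) :
    ∀ u2, bU2 (btJoint pY p1 p2) u2 = bpU2m pY p2 u2 := by
  intro u2
  show ∑ u1, bpUU pY p1 p2 (u1, u2) = _
  exact margPUfact pY p1 p2 hp1 u2
end Marg

section EntForms
variable (pY : Y1 × Y2 → ℝ) (p1 : Y1 → U1 → ℝ) (p2 : Y2 → U2 → ℝ)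

lemma sum3 {A B C : Type} [Fintype A] [Fintype B] [Fintype C] (f : A × B × C → ℝ) :
    ∑ z : A × B × C, f z = ∑ a, ∑ b, ∑ c, f (a, b, c) := by
  rw [Fintype.sum_prod_type]
  exact Finset.sum_congr rfl fun a _ => Fintype.sum_prod_type _

lemma swap13 {A B C : Type} [Fintype A] [Fintype B] [Fintype C] (f : A → B → C → ℝ) :
    ∑ a, ∑ b, ∑ c, f a b c = ∑ b, ∑ c, ∑ a, f a b c := by
  rw [Finset.sum_comm]
  exact Finset.sum_congr rfl fun b _ => Finset.sum_comm

lemma condKL_sum {C : Type} [Fintype C] (f : C → ℝ) (hf : ∀ c, 0 ≤ f c) :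
    ∑ c, f c * Real.log (f c / (∑ c', f c'))
      = ∑ c, f c * Real.log (f c) - (∑ c', f c') * Real.log (∑ c', f c') := by
  rcases eq_or_lt_of_le (Finset.sum_nonneg fun c _ => hf c) with hF | hF
  · have hz : ∀ c ∈ Finset.univ (α := C), f c = 0 :=
      (Finset.sum_eq_zero_iff_of_nonneg fun c _ => hf c).mp hF.symm
    have h1 : ∑ c, f c * Real.log (f c / (∑ c', f c')) = 0 :=
      Finset.sum_eq_zero fun c hc => by rw [hz c hc]; ring
    have h2 : ∑ c, f c * Real.log (f c) = 0 :=
      Finset.sum_eq_zero fun c hc => by rw [hz c hc]; ring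
    rw [h1, h2, ← hF]; ring
  · have key : ∀ c, f c * Real.log (f c / (∑ c', f c'))
        = f c * Real.log (f c) - f c * Real.log (∑ c', f c') := by
      intro c
      rcases (hf c).eq_or_lt with h0 | h0
      · rw [← h0]; ring
      · rw [Real.log_div h0.ne' hF.ne']; ring
    rw [Finset.sum_congr rfl fun c _ => key c, Finset.sum_sub_distrib, ← Finset.sum_mul]

lemma entY1U_eq (hpY : IsPmf pY) :
    ent (bY1U (btJoint pY p1 p2))
      = -∑ u1, ∑ u2, ∑ y1, bpUUY1 pY p1 p2 (u1, u2, y1)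
          * Real.log (bpUUY1 pY p1 p2 (u1, u2, y1)) := by
  unfold ent
  rw [sum3 (fun z : Y1 × U1 × U2 => Real.negMulLog (bY1U (btJoint pY p1 p2) z))]
  have hrfl : ∀ y1 u1 u2, bY1U (btJoint pY p1 p2) (y1, u1, u2) = bpUUY1 pY p1 p2 (u1, u2, y1) :=
    fun _ _ _ => rfl
  simp only [hrfl]
  rw [swap13 (fun y1 u1 u2 => Real.negMulLog (bpUUY1 pY p1 p2 (u1, u2, y1)))]
  simp [Real.negMulLog, Finset.sum_neg_distrib]

lemma entY2U_eq :
    ent (bY2U (btJoint pY p1 p2))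
      = -∑ u1, ∑ u2, ∑ y2, bpUUY2 pY p1 p2 (u1, u2, y2)
          * Real.log (bpUUY2 pY p1 p2 (u1, u2, y2)) := by
  unfold ent
  rw [sum3 (fun z : Y2 × U1 × U2 => Real.negMulLog (bY2U (btJoint pY p1 p2) z))]
  have hrfl : ∀ y2 u1 u2, bY2U (btJoint pY p1 p2) (y2, u1, u2) = bpUUY2 pY p1 p2 (u1, u2, y2) :=
    fun _ _ _ => rfl
  simp only [hrfl]
  rw [swap13 (fun y2 u1 u2 => Real.negMulLog (bpUUY2 pY p1 p2 (u1, u2, y2)))]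
  simp [Real.negMulLog, Finset.sum_neg_distrib]

lemma entU12_eq :
    ent (bU12 (btJoint pY p1 p2))
      = -∑ u1, ∑ u2, bpUU pY p1 p2 (u1, u2) * Real.log (bpUU pY p1 p2 (u1, u2)) := by
  unfold ent
  rw [Fintype.sum_prod_type (fun u : U1 × U2 => Real.negMulLog (bU12 (btJoint pY p1 p2) u))]
  have hrfl : ∀ u1 u2, bU12 (btJoint pY p1 p2) (u1, u2) = bpUU pY p1 p2 (u1, u2) :=
    fun _ _ => rfl
  simp only [hrfl]
  simp [Real.negMulLog, Finset.sum_neg_distrib]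

lemma entU2_eq (hp1 : IsChan p1) :
    ent (bU2 (btJoint pY p1 p2)) = -∑ u2, bpU2m pY p2 u2 * Real.log (bpU2m pY p2 u2) := by
  unfold ent
  rw [Finset.sum_congr rfl fun u2 _ => by rw [bU2fact pY p1 p2 hp1 u2]]
  simp [Real.negMulLog, Finset.sum_neg_distrib]

lemma entY1U2_eq (hp1 : IsChan p1) :
    ent (bY1U2 (btJoint pY p1 p2))
      = -∑ y1, ∑ u2, mAux pY p2 y1 u2 * Real.log (mAux pY p2 y1 u2) := by
  unfold ent
  rw [Fintype.sum_prod_type (fun z : Y1 × U2 => Real.negMulLog (bY1U2 (btJoint pY p1 p2) z))]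
  rw [Finset.sum_congr rfl fun y1 _ => Finset.sum_congr rfl fun u2 _ => by
    rw [bY1U2fact pY p1 p2 hp1 y1 u2]]
  simp [Real.negMulLog, Finset.sum_neg_distrib]

lemma entY2U2_eq (hp1 : IsChan p1) :
    ent (bY2U2 (btJoint pY p1 p2))
      = -∑ y2, ∑ u2, (bpY2 pY y2 * p2 y2 u2) * Real.log (bpY2 pY y2 * p2 y2 u2) := by
  unfold ent
  rw [Fintype.sum_prod_type (fun z : Y2 × U2 => Real.negMulLog (bY2U2 (btJoint pY p1 p2) z))]
  rw [Finset.sum_congr rfl fun y2 _ => Finset.sum_congr rfl fun u2 _ => by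
    rw [bY2U2fact pY p1 p2 hp1 y2 u2]]
  simp [Real.negMulLog, Finset.sum_neg_distrib]

lemma entY2_eq (hp1 : IsChan p1) (hp2 : IsChan p2) :
    ent (bY2 (btJoint pY p1 p2)) = -∑ y2, bpY2 pY y2 * Real.log (bpY2 pY y2) := by
  unfold ent
  rw [Finset.sum_congr rfl fun y2 _ => by rw [bY2fact pY p1 p2 hp1 hp2 y2]]
  simp [Real.negMulLog, Finset.sum_neg_distrib]

end EntForms

lemma split_pm1 (p m : ℝ) : p * m * Real.log p
    = (p * m) * Real.log (p * m) - p * (m * Real.log m) := by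
  rcases eq_or_ne p 0 with h | h
  · simp [h]
  rcases eq_or_ne m 0 with h2 | h2
  · simp [h2]
  rw [Real.log_mul h h2]; ring

lemma split_pm2 (p m : ℝ) : p * m * Real.log p
    = (m * p) * Real.log (m * p) - p * (m * Real.log m) := by
  rcases eq_or_ne p 0 with h | h
  · simp [h]
  rcases eq_or_ne m 0 with h2 | h2
  · simp [h2]
  rw [Real.log_mul h2 h]; ring

section Tid
variable (pY : Y1 × Y2 → ℝ) (p1 : Y1 → U1 → ℝ) (p2 : Y2 → U2 → ℝ)

lemma Tid2 (hp2 : IsChan p2) :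
    ∑ u2, ∑ y2, p2 y2 u2 * bpY2 pY y2 * Real.log (p2 y2 u2)
      = ∑ y2, ∑ u2, (bpY2 pY y2 * p2 y2 u2) * Real.log (bpY2 pY y2 * p2 y2 u2)
        - ∑ y2, bpY2 pY y2 * Real.log (bpY2 pY y2) := by
  refine Finset.sum_comm.trans ?_
  have key : ∀ y2, ∑ u2, p2 y2 u2 * bpY2 pY y2 * Real.log (p2 y2 u2)
      = (∑ u2, (bpY2 pY y2 * p2 y2 u2) * Real.log (bpY2 pY y2 * p2 y2 u2))
        - bpY2 pY y2 * Real.log (bpY2 pY y2) := by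
    intro y2
    rw [Finset.sum_congr rfl fun u2 _ => split_pm2 (p2 y2 u2) (bpY2 pY y2),
      Finset.sum_sub_distrib, ← Finset.sum_mul, (hp2 y2).2, one_mul]
  rw [Finset.sum_congr rfl fun y2 _ => key y2, Finset.sum_sub_distrib]

lemma Tid1 (hp1 : IsChan p1) (hp2 : IsChan p2) :
    ∑ u1, ∑ y1, p1 y1 u1 * bpY1 pY y1 * Real.log (p1 y1 u1)
      = ∑ u1, ∑ u2, ∑ y1, bpUUY1 pY p1 p2 (u1, u2, y1)
          * Real.log (bpUUY1 pY p1 p2 (u1, u2, y1))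
        - ∑ y1, ∑ u2, mAux pY p2 y1 u2 * Real.log (mAux pY p2 y1 u2) := by
  have step : ∀ u1 u2 y1, bpUUY1 pY p1 p2 (u1, u2, y1)
      * Real.log (bpUUY1 pY p1 p2 (u1, u2, y1))
      = p1 y1 u1 * mAux pY p2 y1 u2 * Real.log (p1 y1 u1)
        + p1 y1 u1 * (mAux pY p2 y1 u2 * Real.log (mAux pY p2 y1 u2)) := by
    intro u1 u2 y1
    rw [F1fact pY p1 p2 u1 u2 y1]
    have := split_pm1 (p1 y1 u1) (mAux pY p2 y1 u2)
    linarith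
  have hsplit : ∑ u1, ∑ u2, ∑ y1, bpUUY1 pY p1 p2 (u1, u2, y1)
      * Real.log (bpUUY1 pY p1 p2 (u1, u2, y1))
      = (∑ u1, ∑ u2, ∑ y1, p1 y1 u1 * mAux pY p2 y1 u2 * Real.log (p1 y1 u1))
        + ∑ u1, ∑ u2, ∑ y1, p1 y1 u1 * (mAux pY p2 y1 u2 * Real.log (mAux pY p2 y1 u2)) := by
    rw [Finset.sum_congr rfl fun u1 _ => Finset.sum_congr rfl fun u2 _ =>
      Finset.sum_congr rfl fun y1 _ => step u1 u2 y1]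
    simp only [Finset.sum_add_distrib]
  have hA : ∑ u1, ∑ u2, ∑ y1, p1 y1 u1 * mAux pY p2 y1 u2 * Real.log (p1 y1 u1)
      = ∑ u1, ∑ y1, p1 y1 u1 * bpY1 pY y1 * Real.log (p1 y1 u1) := by
    refine Finset.sum_congr rfl fun u1 _ => ?_
    rw [Finset.sum_comm]
    refine Finset.sum_congr rfl fun y1 _ => ?_
    have h : ∑ u2, p1 y1 u1 * mAux pY p2 y1 u2 * Real.log (p1 y1 u1)
        = (∑ u2, mAux pY p2 y1 u2) * (p1 y1 u1 * Real.log (p1 y1 u1)) := by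
      rw [Finset.sum_mul]; exact Finset.sum_congr rfl fun u2 _ => by ring
    rw [h, sum_mAux pY p2 hp2 y1]; ring
  have hB : ∑ u1, ∑ u2, ∑ y1, p1 y1 u1 * (mAux pY p2 y1 u2 * Real.log (mAux pY p2 y1 u2))
      = ∑ y1, ∑ u2, mAux pY p2 y1 u2 * Real.log (mAux pY p2 y1 u2) := by
    rw [swap13 (fun u1 u2 y1 => p1 y1 u1
      * (mAux pY p2 y1 u2 * Real.log (mAux pY p2 y1 u2)))]
    rw [Finset.sum_comm]
    refine Finset.sum_congr rfl fun y1 _ => Finset.sum_congr rfl fun u2 _ => ?_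
    rw [← Finset.sum_mul, (hp1 y1).2, one_mul]
  linarith [hsplit, hA, hB]

lemma B1star (hpY : IsPmf pY) (hp1 : IsChan p1) (hp2 : IsChan p2) :
    ∑ u1, ∑ u2, ∑ y1, bpUUY1 pY p1 p2 (u1, u2, y1)
        * Real.log (bpUUY1 pY p1 p2 (u1, u2, y1) / bpUU pY p1 p2 (u1, u2))
      = ∑ u1, ∑ u2, ∑ y1, bpUUY1 pY p1 p2 (u1, u2, y1)
          * Real.log (bpUUY1 pY p1 p2 (u1, u2, y1))
        - ∑ u1, ∑ u2, bpUU pY p1 p2 (u1, u2) * Real.log (bpUU pY p1 p2 (u1, u2)) := by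
  have key : ∀ u1 u2, ∑ y1, bpUUY1 pY p1 p2 (u1, u2, y1)
      * Real.log (bpUUY1 pY p1 p2 (u1, u2, y1) / bpUU pY p1 p2 (u1, u2))
      = (∑ y1, bpUUY1 pY p1 p2 (u1, u2, y1) * Real.log (bpUUY1 pY p1 p2 (u1, u2, y1)))
        - bpUU pY p1 p2 (u1, u2) * Real.log (bpUU pY p1 p2 (u1, u2)) := by
    intro u1 u2
    exact condKL_sum (fun y1 => bpUUY1 pY p1 p2 (u1, u2, y1))
      (fun y1 => bpUUY1_nn pY p1 p2 hpY hp1 hp2 _)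
  rw [Finset.sum_congr rfl fun u1 _ => Finset.sum_congr rfl fun u2 _ => key u1 u2]
  simp only [Finset.sum_sub_distrib]

lemma B2star (hpY : IsPmf pY) (hp1 : IsChan p1) (hp2 : IsChan p2) :
    ∑ u1, ∑ u2, ∑ y2, bpUUY2 pY p1 p2 (u1, u2, y2)
        * Real.log (bpUUY2 pY p1 p2 (u1, u2, y2) / bpUU pY p1 p2 (u1, u2))
      = ∑ u1, ∑ u2, ∑ y2, bpUUY2 pY p1 p2 (u1, u2, y2)
          * Real.log (bpUUY2 pY p1 p2 (u1, u2, y2))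
        - ∑ u1, ∑ u2, bpUU pY p1 p2 (u1, u2) * Real.log (bpUU pY p1 p2 (u1, u2)) := by
  have key : ∀ u1 u2, ∑ y2, bpUUY2 pY p1 p2 (u1, u2, y2)
      * Real.log (bpUUY2 pY p1 p2 (u1, u2, y2) / bpUU pY p1 p2 (u1, u2))
      = (∑ y2, bpUUY2 pY p1 p2 (u1, u2, y2) * Real.log (bpUUY2 pY p1 p2 (u1, u2, y2)))
        - bpUU pY p1 p2 (u1, u2) * Real.log (bpUU pY p1 p2 (u1, u2)) := by
    intro u1 u2
    have h := condKL_sum (fun y2 => bpUUY2 pY p1 p2 (u1, u2, y2))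
      (fun y2 => bpUUY2_nn pY p1 p2 hpY hp1 hp2 _)
    rw [margP2fact pY p1 p2 u1 u2] at h
    exact h
  rw [Finset.sum_congr rfl fun u1 _ => Finset.sum_congr rfl fun u2 _ => key u1 u2]
  simp only [Finset.sum_sub_distrib]

end Tid

lemma FbPQ_Qstar (pY : Y1 × Y2 → ℝ) (p1 : Y1 → U1 → ℝ) (p2 : Y2 → U2 → ℝ)
    (s1 s2 a : ℝ) (hpY : IsPmf pY) (hp1 : IsChan p1) (hp2 : IsChan p2) :
    FbPQ s1 s2 a pY p1 p2
      (fun u y1 => bpUUY1 pY p1 p2 (u.1, u.2, y1) / bpUU pY p1 p2 u)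
      (fun u y2 => bpUUY2 pY p1 p2 (u.1, u.2, y2) / bpUU pY p1 p2 u)
      (bpUU pY p1 p2) (bpU2m pY p2)
      = Fb s1 s2 a (btJoint pY p1 p2) := by
  have hB1 := B1star pY p1 p2 hpY hp1 hp2
  have hB2 := B2star pY p1 p2 hpY hp1 hp2
  have hT1 := Tid1 pY p1 p2 hp1 hp2
  have hT2 := Tid2 pY p2 hp2
  have e1 := entY1U_eq pY p1 p2 hpY
  have e2 := entY2U_eq pY p1 p2
  have eU := entU12_eq pY p1 p2
  have eU2 := entU2_eq pY p1 p2 hp1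
  have e12 := entY1U2_eq pY p1 p2 hp1
  have eY2 := entY2_eq pY p1 p2 hp1 hp2
  have eY2U2 := entY2U2_eq pY p1 p2 hp1
  simp only [FbPQ, Fb, bH1, bH2, bI1c, bI2m]
  rw [e1, e2, eU, eU2, e12, eY2, eY2U2]
  linear_combination s1 * hT1 + s2 * hT2 - a * hB1 - (1 - a) * hB2

lemma kl_pointwise {r q : ℝ} (hr : 0 ≤ r) (h : 0 < r → 0 < q) :
    r * Real.log (r / q) = r * Real.log r - r * Real.log q := by
  rcases hr.eq_or_lt with h0 | h0
  · rw [← h0]; ring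
  · rw [Real.log_div h0.ne' (h h0).ne']; ring

lemma perU_KL {C : Type} [Fintype C] (PU : ℝ) (f : C → ℝ) (q : C → ℝ)
    (hf : ∀ c, 0 ≤ f c) (hsum : ∑ c, f c = PU) (hq : ∀ c, 0 < f c → 0 < q c) :
    PU * KL (fun c => f c / PU) q
      = ∑ c, (f c * Real.log (f c / PU) - f c * Real.log (q c)) := by
  have hPUnn : 0 ≤ PU := hsum ▸ Finset.sum_nonneg fun c _ => hf c
  rcases hPUnn.eq_or_lt with h0 | h0
  · have hz : ∀ c ∈ Finset.univ (α := C), f c = 0 :=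
      (Finset.sum_eq_zero_iff_of_nonneg fun c _ => hf c).mp (hsum.trans h0.symm)
    rw [← h0, zero_mul]
    exact (Finset.sum_eq_zero fun c hc => by rw [hz c hc]; ring).symm
  · unfold KL
    rw [Finset.mul_sum]
    refine Finset.sum_congr rfl fun c _ => ?_
    show PU * (f c / PU * Real.log (f c / PU / q c))
        = f c * Real.log (f c / PU) - f c * Real.log (q c)
    rcases (hf c).eq_or_lt with hc0 | hc0
    · rw [← hc0]; simp only [zero_div, zero_mul, mul_zero, sub_self]
    · have hqc := hq c hc0
      rw [Real.log_div (ne_of_gt (div_pos hc0 h0)) hqc.ne']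
      have h2 : PU * (f c / PU * (Real.log (f c / PU) - Real.log (q c)))
          = f c * (Real.log (f c / PU) - Real.log (q c)) := by
        field_simp
      rw [h2]; ring

section Decomp
variable (pY : Y1 × Y2 → ℝ) (p1 : Y1 → U1 → ℝ) (p2 : Y2 → U2 → ℝ)

lemma KL1_glue (hpY : IsPmf pY) (hp1 : IsChan p1) (hp2 : IsChan p2)
    (qY1 : U1 × U2 → Y1 → ℝ)
    (hq1 : ∀ u y1, 0 < bpUUY1 pY p1 p2 (u.1, u.2, y1) → 0 < qY1 u y1) :
    ∑ u : U1 × U2, bpUU pY p1 p2 u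
        * KL (fun y1 => bpUUY1 pY p1 p2 (u.1, u.2, y1) / bpUU pY p1 p2 u) (qY1 u)
      = (∑ u1, ∑ u2, ∑ y1, bpUUY1 pY p1 p2 (u1, u2, y1)
          * Real.log (bpUUY1 pY p1 p2 (u1, u2, y1) / bpUU pY p1 p2 (u1, u2)))
        - ∑ u1, ∑ u2, ∑ y1, bpUUY1 pY p1 p2 (u1, u2, y1) * Real.log (qY1 (u1, u2) y1) := by
  rw [Fintype.sum_prod_type (fun u : U1 × U2 => bpUU pY p1 p2 u
    * KL (fun y1 => bpUUY1 pY p1 p2 (u.1, u.2, y1) / bpUU pY p1 p2 u) (qY1 u))]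
  have key : ∀ u1 u2, bpUU pY p1 p2 (u1, u2)
      * KL (fun y1 => bpUUY1 pY p1 p2 ((u1, u2).1, (u1, u2).2, y1)
          / bpUU pY p1 p2 (u1, u2)) (qY1 (u1, u2))
      = ∑ y1, (bpUUY1 pY p1 p2 (u1, u2, y1)
          * Real.log (bpUUY1 pY p1 p2 (u1, u2, y1) / bpUU pY p1 p2 (u1, u2))
          - bpUUY1 pY p1 p2 (u1, u2, y1) * Real.log (qY1 (u1, u2) y1)) := by
    intro u1 u2
    exact perU_KL (bpUU pY p1 p2 (u1, u2)) (fun y1 => bpUUY1 pY p1 p2 (u1, u2, y1))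
      (qY1 (u1, u2)) (fun y1 => bpUUY1_nn pY p1 p2 hpY hp1 hp2 _) rfl
      (fun y1 h => hq1 (u1, u2) y1 h)
  rw [Finset.sum_congr rfl fun u1 _ => Finset.sum_congr rfl fun u2 _ => key u1 u2]
  simp only [Finset.sum_sub_distrib]

lemma KL2_glue (hpY : IsPmf pY) (hp1 : IsChan p1) (hp2 : IsChan p2)
    (qY2 : U1 × U2 → Y2 → ℝ)
    (hq2 : ∀ u y2, 0 < bpUUY2 pY p1 p2 (u.1, u.2, y2) → 0 < qY2 u y2) :
    ∑ u : U1 × U2, bpUU pY p1 p2 u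
        * KL (fun y2 => bpUUY2 pY p1 p2 (u.1, u.2, y2) / bpUU pY p1 p2 u) (qY2 u)
      = (∑ u1, ∑ u2, ∑ y2, bpUUY2 pY p1 p2 (u1, u2, y2)
          * Real.log (bpUUY2 pY p1 p2 (u1, u2, y2) / bpUU pY p1 p2 (u1, u2)))
        - ∑ u1, ∑ u2, ∑ y2, bpUUY2 pY p1 p2 (u1, u2, y2) * Real.log (qY2 (u1, u2) y2) := by
  rw [Fintype.sum_prod_type (fun u : U1 × U2 => bpUU pY p1 p2 u
    * KL (fun y2 => bpUUY2 pY p1 p2 (u.1, u.2, y2) / bpUU pY p1 p2 u) (qY2 u))]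
  have key : ∀ u1 u2, bpUU pY p1 p2 (u1, u2)
      * KL (fun y2 => bpUUY2 pY p1 p2 ((u1, u2).1, (u1, u2).2, y2)
          / bpUU pY p1 p2 (u1, u2)) (qY2 (u1, u2))
      = ∑ y2, (bpUUY2 pY p1 p2 (u1, u2, y2)
          * Real.log (bpUUY2 pY p1 p2 (u1, u2, y2) / bpUU pY p1 p2 (u1, u2))
          - bpUUY2 pY p1 p2 (u1, u2, y2) * Real.log (qY2 (u1, u2) y2)) := by
    intro u1 u2
    exact perU_KL (bpUU pY p1 p2 (u1, u2)) (fun y2 => bpUUY2 pY p1 p2 (u1, u2, y2))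
      (qY2 (u1, u2)) (fun y2 => bpUUY2_nn pY p1 p2 hpY hp1 hp2 _)
      (margP2fact pY p1 p2 u1 u2) (fun y2 h => hq2 (u1, u2) y2 h)
  rw [Finset.sum_congr rfl fun u1 _ => Finset.sum_congr rfl fun u2 _ => key u1 u2]
  simp only [Finset.sum_sub_distrib]

lemma KL3_glue (hpY : IsPmf pY) (hp1 : IsChan p1) (hp2 : IsChan p2)
    (qUU : U1 × U2 → ℝ) (hq3 : ∀ u, 0 < bpUU pY p1 p2 u → 0 < qUU u) :
    KL (bpUU pY p1 p2) qUU
      = (∑ u1, ∑ u2, bpUU pY p1 p2 (u1, u2) * Real.log (bpUU pY p1 p2 (u1, u2)))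
        - ∑ u1, ∑ u2, bpUU pY p1 p2 (u1, u2) * Real.log (qUU (u1, u2)) := by
  unfold KL
  rw [Fintype.sum_prod_type (fun u : U1 × U2 => bpUU pY p1 p2 u
    * Real.log (bpUU pY p1 p2 u / qUU u))]
  have key : ∀ u1 u2, bpUU pY p1 p2 (u1, u2) * Real.log (bpUU pY p1 p2 (u1, u2) / qUU (u1, u2))
      = bpUU pY p1 p2 (u1, u2) * Real.log (bpUU pY p1 p2 (u1, u2))
        - bpUU pY p1 p2 (u1, u2) * Real.log (qUU (u1, u2)) := fun u1 u2 =>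
    kl_pointwise (bpUU_nn pY p1 p2 hpY hp1 hp2 _) (hq3 (u1, u2))
  rw [Finset.sum_congr rfl fun u1 _ => Finset.sum_congr rfl fun u2 _ => key u1 u2]
  simp only [Finset.sum_sub_distrib]

lemma KL4_glue (hpY : IsPmf pY) (hp2 : IsChan p2)
    (qU2 : U2 → ℝ) (hq4 : ∀ u2, 0 < bpU2m pY p2 u2 → 0 < qU2 u2) :
    KL (bpU2m pY p2) qU2
      = (∑ u2, bpU2m pY p2 u2 * Real.log (bpU2m pY p2 u2))
        - ∑ u2, bpU2m pY p2 u2 * Real.log (qU2 u2) := by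
  unfold KL
  rw [Finset.sum_congr rfl fun u2 _ =>
    kl_pointwise (bpU2m_nn pY p2 hpY hp2 u2) (hq4 u2)]
  rw [Finset.sum_sub_distrib]

end Decomp

lemma FbPQ_decomp (pY : Y1 × Y2 → ℝ) (p1 : Y1 → U1 → ℝ) (p2 : Y2 → U2 → ℝ)
    (s1 s2 a : ℝ) (ha0 : 0 ≤ a) (ha1 : a ≤ 1)
    (hpY : IsPmf pY) (hp1 : IsChan p1) (hp2 : IsChan p2)
    (qY1 : U1 × U2 → Y1 → ℝ) (qY2 : U1 × U2 → Y2 → ℝ) (qUU : U1 × U2 → ℝ) (qU2 : U2 → ℝ)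
    (hq1 : 0 < a → ∀ u y1, 0 < bpUUY1 pY p1 p2 (u.1, u.2, y1) → 0 < qY1 u y1)
    (hq2 : a < 1 → ∀ u y2, 0 < bpUUY2 pY p1 p2 (u.1, u.2, y2) → 0 < qY2 u y2)
    (hq3 : ∀ u, 0 < bpUU pY p1 p2 u → 0 < qUU u)
    (hq4 : ∀ u2, 0 < bpU2m pY p2 u2 → 0 < qU2 u2) :
    FbPQ s1 s2 a pY p1 p2 qY1 qY2 qUU qU2 - Fb s1 s2 a (btJoint pY p1 p2)
      = a * (∑ u : U1 × U2, bpUU pY p1 p2 u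
            * KL (fun y1 => bpUUY1 pY p1 p2 (u.1, u.2, y1) / bpUU pY p1 p2 u) (qY1 u))
        + (1 - a) * (∑ u : U1 × U2, bpUU pY p1 p2 u
            * KL (fun y2 => bpUUY2 pY p1 p2 (u.1, u.2, y2) / bpUU pY p1 p2 u) (qY2 u))
        + s1 * KL (bpUU pY p1 p2) qUU
        + s2 * KL (bpU2m pY p2) qU2 := by
  rw [← FbPQ_Qstar pY p1 p2 s1 s2 a hpY hp1 hp2]
  have h3 := KL3_glue pY p1 p2 hpY hp1 hp2 qUU hq3
  have h4 := KL4_glue pY p2 hpY hp2 qU2 hq4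
  have h1 : a * (∑ u : U1 × U2, bpUU pY p1 p2 u
        * KL (fun y1 => bpUUY1 pY p1 p2 (u.1, u.2, y1) / bpUU pY p1 p2 u) (qY1 u))
      = a * ((∑ u1, ∑ u2, ∑ y1, bpUUY1 pY p1 p2 (u1, u2, y1)
            * Real.log (bpUUY1 pY p1 p2 (u1, u2, y1) / bpUU pY p1 p2 (u1, u2)))
          - ∑ u1, ∑ u2, ∑ y1, bpUUY1 pY p1 p2 (u1, u2, y1)
            * Real.log (qY1 (u1, u2) y1)) := by
    rcases ha0.eq_or_lt with h | h
    · rw [← h, zero_mul, zero_mul]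
    · rw [KL1_glue pY p1 p2 hpY hp1 hp2 qY1 (hq1 h)]
  have h2 : (1 - a) * (∑ u : U1 × U2, bpUU pY p1 p2 u
        * KL (fun y2 => bpUUY2 pY p1 p2 (u.1, u.2, y2) / bpUU pY p1 p2 u) (qY2 u))
      = (1 - a) * ((∑ u1, ∑ u2, ∑ y2, bpUUY2 pY p1 p2 (u1, u2, y2)
            * Real.log (bpUUY2 pY p1 p2 (u1, u2, y2) / bpUU pY p1 p2 (u1, u2)))
          - ∑ u1, ∑ u2, ∑ y2, bpUUY2 pY p1 p2 (u1, u2, y2)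
            * Real.log (qY2 (u1, u2) y2)) := by
    rcases ha1.lt_or_eq with h | h
    · rw [KL2_glue pY p1 p2 hpY hp1 hp2 qY2 (hq2 h)]
    · rw [h, sub_self, zero_mul, zero_mul]
  simp only [FbPQ]
  linear_combination -h1 - h2 - s1 * h3 - s2 * h4

section Nonneg
variable (pY : Y1 × Y2 → ℝ) (p1 : Y1 → U1 → ℝ) (p2 : Y2 → U2 → ℝ)

lemma KL1s_nonneg (hpY : IsPmf pY) (hp1 : IsChan p1) (hp2 : IsChan p2)
    (qY1 : U1 × U2 → Y1 → ℝ) (hchan : IsChan qY1)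
    (hq : ∀ u y1, 0 < bpUUY1 pY p1 p2 (u.1, u.2, y1) → 0 < qY1 u y1) :
    0 ≤ ∑ u : U1 × U2, bpUU pY p1 p2 u
        * KL (fun y1 => bpUUY1 pY p1 p2 (u.1, u.2, y1) / bpUU pY p1 p2 u) (qY1 u) := by
  refine Finset.sum_nonneg fun u _ => ?_
  rcases (bpUU_nn pY p1 p2 hpY hp1 hp2 u).eq_or_lt with h0 | h0
  · rw [← h0, zero_mul]
  · refine mul_nonneg h0.le (KL_nonneg (fun y1 => div_nonneg
      (bpUUY1_nn pY p1 p2 hpY hp1 hp2 _) h0.le) (hchan u).1 ?_ ?_)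
    · rw [(hchan u).2, ← Finset.sum_div]
      rw [show (∑ y1, bpUUY1 pY p1 p2 (u.1, u.2, y1)) = bpUU pY p1 p2 u from rfl]
      rw [div_self h0.ne']
    · intro y1 hy1
      refine hq u y1 ?_
      have h2 := mul_pos hy1 h0
      rwa [div_mul_cancel₀ _ h0.ne'] at h2

lemma KL2s_nonneg (hpY : IsPmf pY) (hp1 : IsChan p1) (hp2 : IsChan p2)
    (qY2 : U1 × U2 → Y2 → ℝ) (hchan : IsChan qY2)
    (hq : ∀ u y2, 0 < bpUUY2 pY p1 p2 (u.1, u.2, y2) → 0 < qY2 u y2) :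
    0 ≤ ∑ u : U1 × U2, bpUU pY p1 p2 u
        * KL (fun y2 => bpUUY2 pY p1 p2 (u.1, u.2, y2) / bpUU pY p1 p2 u) (qY2 u) := by
  refine Finset.sum_nonneg fun u _ => ?_
  rcases (bpUU_nn pY p1 p2 hpY hp1 hp2 u).eq_or_lt with h0 | h0
  · rw [← h0, zero_mul]
  · refine mul_nonneg h0.le (KL_nonneg (fun y2 => div_nonneg
      (bpUUY2_nn pY p1 p2 hpY hp1 hp2 _) h0.le) (hchan u).1 ?_ ?_)
    · rw [(hchan u).2, ← Finset.sum_div]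
      rw [show (∑ y2, bpUUY2 pY p1 p2 (u.1, u.2, y2)) = bpUU pY p1 p2 u from
        margP2fact pY p1 p2 u.1 u.2]
      rw [div_self h0.ne']
    · intro y2 hy2
      refine hq u y2 ?_
      have h2 := mul_pos hy2 h0
      rwa [div_mul_cancel₀ _ h0.ne'] at h2
end Nonneg

section Bridge
variable (pY : Y1 × Y2 → ℝ) (p1 : Y1 → U1 → ℝ) (p2 : Y2 → U2 → ℝ)

lemma FbPQE_eq_coe (s1 s2 a : ℝ)
    (qY1 : U1 × U2 → Y1 → ℝ) (qY2 : U1 × U2 → Y2 → ℝ) (qUU : U1 × U2 → ℝ) (qU2 : U2 → ℝ)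
    (c4 : ∀ u2, ¬(0 < s2 * bpU2m pY p2 u2 ∧ qU2 u2 = 0))
    (c1 : ∀ u1 u2 y1, ¬(0 < a * bpUUY1 pY p1 p2 (u1, u2, y1) ∧ qY1 (u1, u2) y1 = 0))
    (c2 : ∀ u1 u2 y2, ¬(0 < (1 - a) * bpUUY2 pY p1 p2 (u1, u2, y2) ∧ qY2 (u1, u2) y2 = 0))
    (c3 : ∀ u1 u2, ¬(0 < s1 * bpUU pY p1 p2 (u1, u2) ∧ qUU (u1, u2) = 0)) :
    FbPQE s1 s2 a pY p1 p2 qY1 qY2 qUU qU2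
      = ((FbPQ s1 s2 a pY p1 p2 qY1 qY2 qUU qU2 : ℝ) : EReal) := by
  unfold FbPQE
  rw [Finset.sum_congr rfl fun u2 _ => nlogE_eq_coe (c4 u2)]
  rw [Finset.sum_congr rfl fun u1 _ => Finset.sum_congr rfl fun u2 _ =>
    Finset.sum_congr rfl fun y1 _ => nlogE_eq_coe (c1 u1 u2 y1)]
  rw [Finset.sum_congr rfl fun u1 _ => Finset.sum_congr rfl fun u2 _ =>
    Finset.sum_congr rfl fun y2 _ => nlogE_eq_coe (c2 u1 u2 y2)]
  rw [Finset.sum_congr rfl fun u1 _ => Finset.sum_congr rfl fun u2 _ =>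
    nlogE_eq_coe (c3 u1 u2)]
  rw [← ereal_coe_sum]
  rw [show (∑ u1, ∑ u2, ∑ y1, ((-(a * bpUUY1 pY p1 p2 (u1, u2, y1)
      * Real.log (qY1 (u1, u2) y1)) : ℝ) : EReal))
    = ((∑ u1, ∑ u2, ∑ y1, -(a * bpUUY1 pY p1 p2 (u1, u2, y1)
      * Real.log (qY1 (u1, u2) y1)) : ℝ) : EReal) from by
    rw [ereal_coe_sum]
    exact Finset.sum_congr rfl fun u1 _ => by
      rw [ereal_coe_sum]
      exact Finset.sum_congr rfl fun u2 _ => by rw [ereal_coe_sum]]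
  rw [show (∑ u1, ∑ u2, ∑ y2, ((-((1 - a) * bpUUY2 pY p1 p2 (u1, u2, y2)
      * Real.log (qY2 (u1, u2) y2)) : ℝ) : EReal))
    = ((∑ u1, ∑ u2, ∑ y2, -((1 - a) * bpUUY2 pY p1 p2 (u1, u2, y2)
      * Real.log (qY2 (u1, u2) y2)) : ℝ) : EReal) from by
    rw [ereal_coe_sum]
    exact Finset.sum_congr rfl fun u1 _ => by
      rw [ereal_coe_sum]
      exact Finset.sum_congr rfl fun u2 _ => by rw [ereal_coe_sum]]
  rw [show (∑ u1, ∑ u2, ((-(s1 * bpUU pY p1 p2 (u1, u2)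
      * Real.log (qUU (u1, u2))) : ℝ) : EReal))
    = ((∑ u1, ∑ u2, -(s1 * bpUU pY p1 p2 (u1, u2) * Real.log (qUU (u1, u2))) : ℝ) : EReal)
    from by
    rw [ereal_coe_sum]
    exact Finset.sum_congr rfl fun u1 _ => by rw [ereal_coe_sum]]
  rw [← EReal.coe_add, ← EReal.coe_add, ← EReal.coe_add, ← EReal.coe_add]
  rw [EReal.coe_eq_coe_iff]
  simp only [FbPQ, mul_assoc, neg_mul, Finset.sum_neg_distrib, ← Finset.mul_sum]
  ring
end Bridge

section TopCase
variable (pY : Y1 × Y2 → ℝ) (p1 : Y1 → U1 → ℝ) (p2 : Y2 → U2 → ℝ)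

lemma FbPQE_top (s1 s2 a : ℝ)
    (qY1 : U1 × U2 → Y1 → ℝ) (qY2 : U1 × U2 → Y2 → ℝ) (qUU : U1 × U2 → ℝ) (qU2 : U2 → ℝ)
    (h : (∃ u2, 0 < s2 * bpU2m pY p2 u2 ∧ qU2 u2 = 0)
      ∨ (∃ u1 u2 y1, 0 < a * bpUUY1 pY p1 p2 (u1, u2, y1) ∧ qY1 (u1, u2) y1 = 0)
      ∨ (∃ u1 u2 y2, 0 < (1 - a) * bpUUY2 pY p1 p2 (u1, u2, y2) ∧ qY2 (u1, u2) y2 = 0)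
      ∨ (∃ u1 u2, 0 < s1 * bpUU pY p1 p2 (u1, u2) ∧ qUU (u1, u2) = 0)) :
    FbPQE s1 s2 a pY p1 p2 qY1 qY2 qUU qU2 = ⊤ := by
  unfold FbPQE
  have hb4 : (∑ u2, nlogE (s2 * bpU2m pY p2 u2) (qU2 u2)) ≠ ⊥ :=
    ereal_sum_ne_bot _ _ fun _ _ => nlogE_ne_bot _ _
  have hb1 : (∑ u1, ∑ u2, ∑ y1, nlogE (a * bpUUY1 pY p1 p2 (u1, u2, y1))
      (qY1 (u1, u2) y1)) ≠ ⊥ :=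
    ereal_sum_ne_bot _ _ fun u1 _ => ereal_sum_ne_bot _ _ fun u2 _ =>
      ereal_sum_ne_bot _ _ fun y1 _ => nlogE_ne_bot _ _
  have hb2 : (∑ u1, ∑ u2, ∑ y2, nlogE ((1 - a) * bpUUY2 pY p1 p2 (u1, u2, y2))
      (qY2 (u1, u2) y2)) ≠ ⊥ :=
    ereal_sum_ne_bot _ _ fun u1 _ => ereal_sum_ne_bot _ _ fun u2 _ =>
      ereal_sum_ne_bot _ _ fun y2 _ => nlogE_ne_bot _ _
  have hb3 : (∑ u1, ∑ u2, nlogE (s1 * bpUU pY p1 p2 (u1, u2)) (qUU (u1, u2))) ≠ ⊥ :=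
    ereal_sum_ne_bot _ _ fun u1 _ => ereal_sum_ne_bot _ _ fun u2 _ => nlogE_ne_bot _ _
  have hr0 : ((s1 * (∑ u1, ∑ y1, p1 y1 u1 * bpY1 pY y1 * Real.log (p1 y1 u1))
      + s2 * (∑ u2, ∑ y2, p2 y2 u2 * bpY2 pY y2 * Real.log (p2 y2 u2))
      + s1 * (∑ u2, bpU2m pY p2 u2 * Real.log (bpU2m pY p2 u2)) : ℝ) : EReal) ≠ ⊥ :=
    EReal.coe_ne_bot _
  have hadd : ∀ x y : EReal, x ≠ ⊥ → y ≠ ⊥ → x + y ≠ ⊥ := by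
    intro x y hx hy
    rw [Ne, EReal.add_eq_bot_iff]
    push_neg
    exact ⟨hx, hy⟩
  rcases h with ⟨u2, hc⟩ | ⟨u1, u2, y1, hc⟩ | ⟨u1, u2, y2, hc⟩ | ⟨u1, u2, hc⟩
  · have htop : (∑ u2, nlogE (s2 * bpU2m pY p2 u2) (qU2 u2)) = ⊤ :=
      ereal_sum_eq_top _ _ (fun _ _ => nlogE_ne_bot _ _) (Finset.mem_univ u2)
        (by unfold nlogE; rw [if_pos hc])
    rw [htop, EReal.add_top_of_ne_bot hr0, EReal.top_add_of_ne_bot hb1,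
      EReal.top_add_of_ne_bot hb2, EReal.top_add_of_ne_bot hb3]
  · have htop : (∑ u1, ∑ u2, ∑ y1, nlogE (a * bpUUY1 pY p1 p2 (u1, u2, y1))
        (qY1 (u1, u2) y1)) = ⊤ := by
      refine ereal_sum_eq_top _ _ (fun u1' _ => ereal_sum_ne_bot _ _ fun u2' _ =>
        ereal_sum_ne_bot _ _ fun y1' _ => nlogE_ne_bot _ _) (Finset.mem_univ u1) ?_
      refine ereal_sum_eq_top _ _ (fun u2' _ => ereal_sum_ne_bot _ _ fun y1' _ =>
        nlogE_ne_bot _ _) (Finset.mem_univ u2) ?_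
      exact ereal_sum_eq_top _ _ (fun y1' _ => nlogE_ne_bot _ _) (Finset.mem_univ y1)
        (by unfold nlogE; rw [if_pos hc])
    rw [htop, EReal.add_top_of_ne_bot (hadd _ _ hr0 hb4), EReal.top_add_of_ne_bot hb2,
      EReal.top_add_of_ne_bot hb3]
  · have htop : (∑ u1, ∑ u2, ∑ y2, nlogE ((1 - a) * bpUUY2 pY p1 p2 (u1, u2, y2))
        (qY2 (u1, u2) y2)) = ⊤ := by
      refine ereal_sum_eq_top _ _ (fun u1' _ => ereal_sum_ne_bot _ _ fun u2' _ =>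
        ereal_sum_ne_bot _ _ fun y2' _ => nlogE_ne_bot _ _) (Finset.mem_univ u1) ?_
      refine ereal_sum_eq_top _ _ (fun u2' _ => ereal_sum_ne_bot _ _ fun y2' _ =>
        nlogE_ne_bot _ _) (Finset.mem_univ u2) ?_
      exact ereal_sum_eq_top _ _ (fun y2' _ => nlogE_ne_bot _ _) (Finset.mem_univ y2)
        (by unfold nlogE; rw [if_pos hc])
    rw [htop, EReal.add_top_of_ne_bot (hadd _ _ (hadd _ _ hr0 hb4) hb1),
      EReal.top_add_of_ne_bot hb3]
  · have htop : (∑ u1, ∑ u2, nlogE (s1 * bpUU pY p1 p2 (u1, u2)) (qUU (u1, u2))) = ⊤ := by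
      refine ereal_sum_eq_top _ _ (fun u1' _ => ereal_sum_ne_bot _ _ fun u2' _ =>
        nlogE_ne_bot _ _) (Finset.mem_univ u1) ?_
      exact ereal_sum_eq_top _ _ (fun u2' _ => nlogE_ne_bot _ _) (Finset.mem_univ u2)
        (by unfold nlogE; rw [if_pos hc])
    rw [htop, EReal.add_top_of_ne_bot (hadd _ _ (hadd _ _ (hadd _ _ hr0 hb4) hb1) hb2)]
end TopCase

section Attain
variable (pY : Y1 × Y2 → ℝ) (p1 : Y1 → U1 → ℝ) (p2 : Y2 → U2 → ℝ)

lemma PU_pos_of_P1 (hpY : IsPmf pY) (hp1 : IsChan p1) (hp2 : IsChan p2) {u1 : U1} {u2 : U2}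
    {y1 : Y1} (h : 0 < bpUUY1 pY p1 p2 (u1, u2, y1)) : 0 < bpUU pY p1 p2 (u1, u2) :=
  lt_of_lt_of_le h (Finset.single_le_sum
    (fun y _ => bpUUY1_nn pY p1 p2 hpY hp1 hp2 (u1, u2, y)) (Finset.mem_univ y1))

lemma PU_pos_of_P2 (hpY : IsPmf pY) (hp1 : IsChan p1) (hp2 : IsChan p2) {u1 : U1} {u2 : U2}
    {y2 : Y2} (h : 0 < bpUUY2 pY p1 p2 (u1, u2, y2)) : 0 < bpUU pY p1 p2 (u1, u2) := by
  rw [← margP2fact pY p1 p2 u1 u2]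
  exact lt_of_lt_of_le h (Finset.single_le_sum
    (fun y _ => bpUUY2_nn pY p1 p2 hpY hp1 hp2 (u1, u2, y)) (Finset.mem_univ y2))

lemma pos_of_mul_pos_nn {a x : ℝ} (hx : 0 ≤ x) (h : 0 < a * x) : 0 < x := by
  rcases hx.eq_or_lt with h0 | h0
  · rw [← h0, mul_zero] at h; exact absurd h (lt_irrefl 0)
  · exact h0

lemma FbPQE_attain (s1 s2 a : ℝ)
    (hpY : IsPmf pY) (hp1 : IsChan p1) (hp2 : IsChan p2)
    (qY1 : U1 × U2 → Y1 → ℝ) (qY2 : U1 × U2 → Y2 → ℝ) (qUU : U1 × U2 → ℝ) (qU2 : U2 → ℝ)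
    (hA1 : ∀ u : U1 × U2, 0 < bpUU pY p1 p2 u →
      ∀ y1, qY1 u y1 = bpUUY1 pY p1 p2 (u.1, u.2, y1) / bpUU pY p1 p2 u)
    (hA2 : ∀ u : U1 × U2, 0 < bpUU pY p1 p2 u →
      ∀ y2, qY2 u y2 = bpUUY2 pY p1 p2 (u.1, u.2, y2) / bpUU pY p1 p2 u)
    (hA3 : ∀ u : U1 × U2, qUU u = bpUU pY p1 p2 u) (hA4 : ∀ u2, qU2 u2 = bpU2m pY p2 u2) :
    FbPQE s1 s2 a pY p1 p2 qY1 qY2 qUU qU2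
      = ((Fb s1 s2 a (btJoint pY p1 p2) : ℝ) : EReal) := by
  have c1 : ∀ u1 u2 y1, ¬(0 < a * bpUUY1 pY p1 p2 (u1, u2, y1) ∧ qY1 (u1, u2) y1 = 0) := by
    rintro u1 u2 y1 ⟨hpos, hq0⟩
    have hP1 := pos_of_mul_pos_nn (bpUUY1_nn pY p1 p2 hpY hp1 hp2 _) hpos
    have hPU := PU_pos_of_P1 pY p1 p2 hpY hp1 hp2 hP1
    have h := hA1 (u1, u2) hPU y1
    rw [hq0] at h
    exact absurd h.symm (div_pos hP1 hPU).ne'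
  have c2 : ∀ u1 u2 y2, ¬(0 < (1 - a) * bpUUY2 pY p1 p2 (u1, u2, y2)
      ∧ qY2 (u1, u2) y2 = 0) := by
    rintro u1 u2 y2 ⟨hpos, hq0⟩
    have hP2 := pos_of_mul_pos_nn (bpUUY2_nn pY p1 p2 hpY hp1 hp2 _) hpos
    have hPU := PU_pos_of_P2 pY p1 p2 hpY hp1 hp2 hP2
    have h := hA2 (u1, u2) hPU y2
    rw [hq0] at h
    exact absurd h.symm (div_pos hP2 hPU).ne'
  have c3 : ∀ u1 u2, ¬(0 < s1 * bpUU pY p1 p2 (u1, u2) ∧ qUU (u1, u2) = 0) := by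
    rintro u1 u2 ⟨hpos, hq0⟩
    have hPU := pos_of_mul_pos_nn (bpUU_nn pY p1 p2 hpY hp1 hp2 _) hpos
    rw [hA3 (u1, u2)] at hq0
    exact absurd hq0 hPU.ne'
  have c4 : ∀ u2, ¬(0 < s2 * bpU2m pY p2 u2 ∧ qU2 u2 = 0) := by
    rintro u2 ⟨hpos, hq0⟩
    have hP := pos_of_mul_pos_nn (bpU2m_nn pY p2 hpY hp2 _) hpos
    rw [hA4 u2] at hq0
    exact absurd hq0 hP.ne'
  rw [FbPQE_eq_coe pY p1 p2 s1 s2 a qY1 qY2 qUU qU2 c4 c1 c2 c3]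
  rw [EReal.coe_eq_coe_iff]
  rw [show qUU = bpUU pY p1 p2 from funext hA3, show qU2 = bpU2m pY p2 from funext hA4]
  rw [← FbPQ_Qstar pY p1 p2 s1 s2 a hpY hp1 hp2]
  have hB1 : ∑ u1, ∑ u2, ∑ y1, bpUUY1 pY p1 p2 (u1, u2, y1) * Real.log (qY1 (u1, u2) y1)
      = ∑ u1, ∑ u2, ∑ y1, bpUUY1 pY p1 p2 (u1, u2, y1)
        * Real.log (bpUUY1 pY p1 p2 (u1, u2, y1) / bpUU pY p1 p2 (u1, u2)) := by
    refine Finset.sum_congr rfl fun u1 _ => Finset.sum_congr rfl fun u2 _ =>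
      Finset.sum_congr rfl fun y1 _ => ?_
    rcases (bpUUY1_nn pY p1 p2 hpY hp1 hp2 (u1, u2, y1)).eq_or_lt with h0 | h0
    · rw [← h0, zero_mul, zero_mul]
    · rw [hA1 (u1, u2) (PU_pos_of_P1 pY p1 p2 hpY hp1 hp2 h0) y1]
  have hB2 : ∑ u1, ∑ u2, ∑ y2, bpUUY2 pY p1 p2 (u1, u2, y2) * Real.log (qY2 (u1, u2) y2)
      = ∑ u1, ∑ u2, ∑ y2, bpUUY2 pY p1 p2 (u1, u2, y2)
        * Real.log (bpUUY2 pY p1 p2 (u1, u2, y2) / bpUU pY p1 p2 (u1, u2)) := by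
    refine Finset.sum_congr rfl fun u1 _ => Finset.sum_congr rfl fun u2 _ =>
      Finset.sum_congr rfl fun y2 _ => ?_
    rcases (bpUUY2_nn pY p1 p2 hpY hp1 hp2 (u1, u2, y2)).eq_or_lt with h0 | h0
    · rw [← h0, zero_mul, zero_mul]
    · rw [hA2 (u1, u2) (PU_pos_of_P2 pY p1 p2 hpY hp1 hp2 h0) y2]
  simp only [FbPQ]
  rw [hB1, hB2]
end Attain

lemma supp_pos_of_cond {a x q : ℝ} (hq0 : 0 ≤ q) (H : ¬(0 < a * x ∧ q = 0))
    (ha : 0 < a) (hx : 0 < x) : 0 < q := by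
  rcases hq0.eq_or_lt with h | h
  · exact absurd ⟨mul_pos ha hx, h.symm⟩ H
  · exact h


section Main
variable (pY : Y1 × Y2 → ℝ) (p1 : Y1 → U1 → ℝ) (p2 : Y2 → U2 → ℝ)

lemma KL1term_nonneg (hpY : IsPmf pY) (hp1 : IsChan p1) (hp2 : IsChan p2)
    (qY1 : U1 × U2 → Y1 → ℝ) (hchan : IsChan qY1)
    (hq : ∀ u y1, 0 < bpUUY1 pY p1 p2 (u.1, u.2, y1) → 0 < qY1 u y1) (u : U1 × U2) :
    0 ≤ bpUU pY p1 p2 u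
        * KL (fun y1 => bpUUY1 pY p1 p2 (u.1, u.2, y1) / bpUU pY p1 p2 u) (qY1 u) := by
  rcases (bpUU_nn pY p1 p2 hpY hp1 hp2 u).eq_or_lt with h0 | h0
  · rw [← h0, zero_mul]
  · refine mul_nonneg h0.le (KL_nonneg (fun y1 => div_nonneg
      (bpUUY1_nn pY p1 p2 hpY hp1 hp2 _) h0.le) (hchan u).1 ?_ ?_)
    · rw [(hchan u).2, ← Finset.sum_div]
      rw [show (∑ y1, bpUUY1 pY p1 p2 (u.1, u.2, y1)) = bpUU pY p1 p2 u from rfl]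
      rw [div_self h0.ne']
    · intro y1 hy1
      refine hq u y1 ?_
      have h2 := mul_pos hy1 h0
      rwa [div_mul_cancel₀ _ h0.ne'] at h2

lemma KL2term_nonneg (hpY : IsPmf pY) (hp1 : IsChan p1) (hp2 : IsChan p2)
    (qY2 : U1 × U2 → Y2 → ℝ) (hchan : IsChan qY2)
    (hq : ∀ u y2, 0 < bpUUY2 pY p1 p2 (u.1, u.2, y2) → 0 < qY2 u y2) (u : U1 × U2) :
    0 ≤ bpUU pY p1 p2 u
        * KL (fun y2 => bpUUY2 pY p1 p2 (u.1, u.2, y2) / bpUU pY p1 p2 u) (qY2 u) := by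
  rcases (bpUU_nn pY p1 p2 hpY hp1 hp2 u).eq_or_lt with h0 | h0
  · rw [← h0, zero_mul]
  · refine mul_nonneg h0.le (KL_nonneg (fun y2 => div_nonneg
      (bpUUY2_nn pY p1 p2 hpY hp1 hp2 _) h0.le) (hchan u).1 ?_ ?_)
    · rw [(hchan u).2, ← Finset.sum_div]
      rw [show (∑ y2, bpUUY2 pY p1 p2 (u.1, u.2, y2)) = bpUU pY p1 p2 u from
        margP2fact pY p1 p2 u.1 u.2]
      rw [div_self h0.ne']
    · intro y2 hy2
      refine hq u y2 ?_
      have h2 := mul_pos hy2 h0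
      rwa [div_mul_cancel₀ _ h0.ne'] at h2

lemma FbPQ_ge (s1 s2 a : ℝ) (hs1 : 0 < s1) (hs2 : 0 < s2) (ha0 : 0 ≤ a) (ha1 : a ≤ 1)
    (hpY : IsPmf pY) (hp1 : IsChan p1) (hp2 : IsChan p2)
    (qY1 : U1 × U2 → Y1 → ℝ) (qY2 : U1 × U2 → Y2 → ℝ) (qUU : U1 × U2 → ℝ) (qU2 : U2 → ℝ)
    (hc1 : IsChan qY1) (hc2 : IsChan qY2) (hc3 : IsPmf qUU) (hc4 : IsPmf qU2)
    (hq1 : 0 < a → ∀ u y1, 0 < bpUUY1 pY p1 p2 (u.1, u.2, y1) → 0 < qY1 u y1)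
    (hq2 : a < 1 → ∀ u y2, 0 < bpUUY2 pY p1 p2 (u.1, u.2, y2) → 0 < qY2 u y2)
    (hq3 : ∀ u, 0 < bpUU pY p1 p2 u → 0 < qUU u)
    (hq4 : ∀ u2, 0 < bpU2m pY p2 u2 → 0 < qU2 u2) :
    Fb s1 s2 a (btJoint pY p1 p2) ≤ FbPQ s1 s2 a pY p1 p2 qY1 qY2 qUU qU2 := by
  have hdec := FbPQ_decomp pY p1 p2 s1 s2 a ha0 ha1 hpY hp1 hp2 qY1 qY2 qUU qU2
    hq1 hq2 hq3 hq4
  have n1 : 0 ≤ a * (∑ u : U1 × U2, bpUU pY p1 p2 u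
      * KL (fun y1 => bpUUY1 pY p1 p2 (u.1, u.2, y1) / bpUU pY p1 p2 u) (qY1 u)) := by
    rcases ha0.eq_or_lt with h | h
    · rw [← h, zero_mul]
    · exact mul_nonneg h.le (KL1s_nonneg pY p1 p2 hpY hp1 hp2 qY1 hc1 (hq1 h))
  have n2 : 0 ≤ (1 - a) * (∑ u : U1 × U2, bpUU pY p1 p2 u
      * KL (fun y2 => bpUUY2 pY p1 p2 (u.1, u.2, y2) / bpUU pY p1 p2 u) (qY2 u)) := by
    rcases ha1.lt_or_eq with h | h
    · exact mul_nonneg (by linarith) (KL2s_nonneg pY p1 p2 hpY hp1 hp2 qY2 hc2 (hq2 h))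
    · rw [h, sub_self, zero_mul]
  have n3 : 0 ≤ s1 * KL (bpUU pY p1 p2) qUU :=
    mul_nonneg hs1.le (KL_nonneg (bpUU_nn pY p1 p2 hpY hp1 hp2) hc3.1
      (by rw [hc3.2, (bpUU_pmf pY p1 p2 hpY hp1 hp2).2]) hq3)
  have n4 : 0 ≤ s2 * KL (bpU2m pY p2) qU2 :=
    mul_nonneg hs2.le (KL_nonneg (bpU2m_nn pY p2 hpY hp2) hc4.1
      (by rw [hc4.2, (bpU2m_pmf pY p2 hpY hp2).2]) hq4)
  linarith

lemma eq_forces (s1 s2 a : ℝ) (hs1 : 0 < s1) (hs2 : 0 < s2) (ha0 : 0 ≤ a) (ha1 : a ≤ 1)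
    (hpY : IsPmf pY) (hp1 : IsChan p1) (hp2 : IsChan p2)
    (qY1 : U1 × U2 → Y1 → ℝ) (qY2 : U1 × U2 → Y2 → ℝ) (qUU : U1 × U2 → ℝ) (qU2 : U2 → ℝ)
    (hc1 : IsChan qY1) (hc2 : IsChan qY2) (hc3 : IsPmf qUU) (hc4 : IsPmf qU2)
    (hq1 : 0 < a → ∀ u y1, 0 < bpUUY1 pY p1 p2 (u.1, u.2, y1) → 0 < qY1 u y1)
    (hq2 : a < 1 → ∀ u y2, 0 < bpUUY2 pY p1 p2 (u.1, u.2, y2) → 0 < qY2 u y2)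
    (hq3 : ∀ u, 0 < bpUU pY p1 p2 u → 0 < qUU u)
    (hq4 : ∀ u2, 0 < bpU2m pY p2 u2 → 0 < qU2 u2)
    (heq : FbPQ s1 s2 a pY p1 p2 qY1 qY2 qUU qU2 = Fb s1 s2 a (btJoint pY p1 p2)) :
    (0 < a → ∀ u : U1 × U2, 0 < bpUU pY p1 p2 u →
        ∀ y1, 0 < bpUUY1 pY p1 p2 (u.1, u.2, y1) →
          qY1 u y1 = bpUUY1 pY p1 p2 (u.1, u.2, y1) / bpUU pY p1 p2 u) ∧
    (a < 1 → ∀ u : U1 × U2, 0 < bpUU pY p1 p2 u →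
        ∀ y2, 0 < bpUUY2 pY p1 p2 (u.1, u.2, y2) →
          qY2 u y2 = bpUUY2 pY p1 p2 (u.1, u.2, y2) / bpUU pY p1 p2 u) ∧
    (∀ u : U1 × U2, 0 < bpUU pY p1 p2 u → qUU u = bpUU pY p1 p2 u) ∧
    (∀ u2, 0 < bpU2m pY p2 u2 → qU2 u2 = bpU2m pY p2 u2) := by
  have hdec := FbPQ_decomp pY p1 p2 s1 s2 a ha0 ha1 hpY hp1 hp2 qY1 qY2 qUU qU2
    hq1 hq2 hq3 hq4
  rw [heq, sub_self] at hdec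
  have n1 : 0 ≤ a * (∑ u : U1 × U2, bpUU pY p1 p2 u
      * KL (fun y1 => bpUUY1 pY p1 p2 (u.1, u.2, y1) / bpUU pY p1 p2 u) (qY1 u)) := by
    rcases ha0.eq_or_lt with h | h
    · rw [← h, zero_mul]
    · exact mul_nonneg h.le (KL1s_nonneg pY p1 p2 hpY hp1 hp2 qY1 hc1 (hq1 h))
  have n2 : 0 ≤ (1 - a) * (∑ u : U1 × U2, bpUU pY p1 p2 u
      * KL (fun y2 => bpUUY2 pY p1 p2 (u.1, u.2, y2) / bpUU pY p1 p2 u) (qY2 u)) := by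
    rcases ha1.lt_or_eq with h | h
    · exact mul_nonneg (by linarith) (KL2s_nonneg pY p1 p2 hpY hp1 hp2 qY2 hc2 (hq2 h))
    · rw [h, sub_self, zero_mul]
  have n3 : 0 ≤ s1 * KL (bpUU pY p1 p2) qUU :=
    mul_nonneg hs1.le (KL_nonneg (bpUU_nn pY p1 p2 hpY hp1 hp2) hc3.1
      (by rw [hc3.2, (bpUU_pmf pY p1 p2 hpY hp1 hp2).2]) hq3)
  have n4 : 0 ≤ s2 * KL (bpU2m pY p2) qU2 :=
    mul_nonneg hs2.le (KL_nonneg (bpU2m_nn pY p2 hpY hp2) hc4.1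
      (by rw [hc4.2, (bpU2m_pmf pY p2 hpY hp2).2]) hq4)
  have z1 : a * (∑ u : U1 × U2, bpUU pY p1 p2 u
      * KL (fun y1 => bpUUY1 pY p1 p2 (u.1, u.2, y1) / bpUU pY p1 p2 u) (qY1 u)) = 0 := by
    linarith
  have z2 : (1 - a) * (∑ u : U1 × U2, bpUU pY p1 p2 u
      * KL (fun y2 => bpUUY2 pY p1 p2 (u.1, u.2, y2) / bpUU pY p1 p2 u) (qY2 u)) = 0 := by
    linarith
  have z3 : s1 * KL (bpUU pY p1 p2) qUU = 0 := by linarith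
  have z4 : s2 * KL (bpU2m pY p2) qU2 = 0 := by linarith
  refine ⟨?_, ?_, ?_, ?_⟩
  · intro ha u hPU y1 hP1
    have hX1 : (∑ u : U1 × U2, bpUU pY p1 p2 u
        * KL (fun y1 => bpUUY1 pY p1 p2 (u.1, u.2, y1) / bpUU pY p1 p2 u) (qY1 u)) = 0 :=
      (mul_eq_zero.mp z1).resolve_left ha.ne'
    have hz := (Finset.sum_eq_zero_iff_of_nonneg fun u' _ =>
      KL1term_nonneg pY p1 p2 hpY hp1 hp2 qY1 hc1 (hq1 ha) u').mp hX1 u (Finset.mem_univ u)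
    have hKL : KL (fun y1 => bpUUY1 pY p1 p2 (u.1, u.2, y1) / bpUU pY p1 p2 u) (qY1 u) = 0 :=
      (mul_eq_zero.mp hz).resolve_left hPU.ne'
    refine KL_eq_zero (fun y => div_nonneg (bpUUY1_nn pY p1 p2 hpY hp1 hp2 _) hPU.le)
      (hc1 u).1 ?_ (hc1 u).2 ?_ hKL y1 (div_pos hP1 hPU)
    · rw [← Finset.sum_div,
        show (∑ y1, bpUUY1 pY p1 p2 (u.1, u.2, y1)) = bpUU pY p1 p2 u from rfl,
        div_self hPU.ne']
    · intro y hy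
      refine hq1 ha u y ?_
      have h2 := mul_pos hy hPU
      rwa [div_mul_cancel₀ _ hPU.ne'] at h2
  · intro ha u hPU y2 hP2
    have hX2 : (∑ u : U1 × U2, bpUU pY p1 p2 u
        * KL (fun y2 => bpUUY2 pY p1 p2 (u.1, u.2, y2) / bpUU pY p1 p2 u) (qY2 u)) = 0 :=
      (mul_eq_zero.mp z2).resolve_left (by linarith : (1 : ℝ) - a ≠ 0)
    have hz := (Finset.sum_eq_zero_iff_of_nonneg fun u' _ =>
      KL2term_nonneg pY p1 p2 hpY hp1 hp2 qY2 hc2 (hq2 ha) u').mp hX2 u (Finset.mem_univ u)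
    have hKL : KL (fun y2 => bpUUY2 pY p1 p2 (u.1, u.2, y2) / bpUU pY p1 p2 u) (qY2 u) = 0 :=
      (mul_eq_zero.mp hz).resolve_left hPU.ne'
    refine KL_eq_zero (fun y => div_nonneg (bpUUY2_nn pY p1 p2 hpY hp1 hp2 _) hPU.le)
      (hc2 u).1 ?_ (hc2 u).2 ?_ hKL y2 (div_pos hP2 hPU)
    · rw [← Finset.sum_div,
        show (∑ y2, bpUUY2 pY p1 p2 (u.1, u.2, y2)) = bpUU pY p1 p2 u from
          margP2fact pY p1 p2 u.1 u.2,
        div_self hPU.ne']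
    · intro y hy
      refine hq2 ha u y ?_
      have h2 := mul_pos hy hPU
      rwa [div_mul_cancel₀ _ hPU.ne'] at h2
  · exact KL_eq_zero (bpUU_nn pY p1 p2 hpY hp1 hp2) hc3.1
      (bpUU_pmf pY p1 p2 hpY hp1 hp2).2 hc3.2 hq3
      ((mul_eq_zero.mp z3).resolve_left hs1.ne')
  · exact KL_eq_zero (bpU2m_nn pY p2 hpY hp2) hc4.1
      (bpU2m_pmf pY p2 hpY hp2).2 hc4.2 hq4
      ((mul_eq_zero.mp z4).resolve_left hs2.ne')
end Main

section Derive
variable (pY : Y1 × Y2 → ℝ) (p1 : Y1 → U1 → ℝ) (p2 : Y2 → U2 → ℝ)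

lemma hq1_of {a : ℝ} (qY1 : U1 × U2 → Y1 → ℝ) (hc1 : IsChan qY1)
    (H1 : ∀ u1 u2 y1, ¬(0 < a * bpUUY1 pY p1 p2 (u1, u2, y1) ∧ qY1 (u1, u2) y1 = 0)) :
    0 < a → ∀ u y1, 0 < bpUUY1 pY p1 p2 (u.1, u.2, y1) → 0 < qY1 u y1 :=
  fun ha u y1 hP => supp_pos_of_cond ((hc1 u).1 y1) (H1 u.1 u.2 y1) ha hP

lemma hq2_of {a : ℝ} (qY2 : U1 × U2 → Y2 → ℝ) (hc2 : IsChan qY2)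
    (H2 : ∀ u1 u2 y2, ¬(0 < (1 - a) * bpUUY2 pY p1 p2 (u1, u2, y2)
      ∧ qY2 (u1, u2) y2 = 0)) :
    a < 1 → ∀ u y2, 0 < bpUUY2 pY p1 p2 (u.1, u.2, y2) → 0 < qY2 u y2 :=
  fun ha u y2 hP => supp_pos_of_cond ((hc2 u).1 y2) (H2 u.1 u.2 y2) (by linarith) hP

lemma hq3_of {s1 : ℝ} (hs1 : 0 < s1) (qUU : U1 × U2 → ℝ) (hc3 : IsPmf qUU)
    (H3 : ∀ u1 u2, ¬(0 < s1 * bpUU pY p1 p2 (u1, u2) ∧ qUU (u1, u2) = 0)) :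
    ∀ u, 0 < bpUU pY p1 p2 u → 0 < qUU u :=
  fun u hP => supp_pos_of_cond (hc3.1 u) (H3 u.1 u.2) hs1 hP

lemma hq4_of {s2 : ℝ} (hs2 : 0 < s2) (qU2 : U2 → ℝ) (hc4 : IsPmf qU2)
    (H4 : ∀ u2, ¬(0 < s2 * bpU2m pY p2 u2 ∧ qU2 u2 = 0)) :
    ∀ u2, 0 < bpU2m pY p2 u2 → 0 < qU2 u2 :=
  fun u2 hP => supp_pos_of_cond (hc4.1 u2) (H4 u2) hs2 hP

end Derive
theorem bt_optimal_Q_for_fixed_P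
    (pY : Y1 × Y2 → ℝ) (hpY : IsPmf pY)
    (s1 s2 a : ℝ) (hs1 : 0 < s1) (hs2 : 0 < s2) (ha0 : 0 ≤ a) (ha1 : a ≤ 1)
    (p1 : Y1 → U1 → ℝ) (p2 : Y2 → U2 → ℝ) (hp1 : IsChan p1) (hp2 : IsChan p2) :
    -- KL decomposition for strictly positive `Q`
    (∀ (qY1 : U1 × U2 → Y1 → ℝ) (qY2 : U1 × U2 → Y2 → ℝ)
       (qUU : U1 × U2 → ℝ) (qU2 : U2 → ℝ),
      IsChan qY1 → IsChan qY2 → IsPmf qUU → IsPmf qU2 →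
      (∀ u y1, 0 < qY1 u y1) → (∀ u y2, 0 < qY2 u y2) →
      (∀ u, 0 < qUU u) → (∀ u2, 0 < qU2 u2) →
      FbPQ s1 s2 a pY p1 p2 qY1 qY2 qUU qU2 - Fb s1 s2 a (btJoint pY p1 p2)
        = a * (∑ u : U1 × U2, bpUU pY p1 p2 u
            * KL (fun y1 => bpUUY1 pY p1 p2 (u.1, u.2, y1) / bpUU pY p1 p2 u) (qY1 u))
          + (1 - a) * (∑ u : U1 × U2, bpUU pY p1 p2 u
            * KL (fun y2 => bpUUY2 pY p1 p2 (u.1, u.2, y2) / bpUU pY p1 p2 u) (qY2 u))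
          + s1 * KL (bpUU pY p1 p2) qUU
          + s2 * KL (bpU2m pY p2) qU2 ∧
      0 ≤ FbPQ s1 s2 a pY p1 p2 qY1 qY2 qUU qU2 - Fb s1 s2 a (btJoint pY p1 p2)) ∧
    -- the infimum over all auxiliary tuples equals `F_β(P)` ...
    sInf {v : EReal | ∃ qY1 : U1 × U2 → Y1 → ℝ, ∃ qY2 : U1 × U2 → Y2 → ℝ,
        ∃ qUU : U1 × U2 → ℝ, ∃ qU2 : U2 → ℝ,
        IsChan qY1 ∧ IsChan qY2 ∧ IsPmf qUU ∧ IsPmf qU2 ∧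
        v = FbPQE s1 s2 a pY p1 p2 qY1 qY2 qUU qU2}
      = ((Fb s1 s2 a (btJoint pY p1 p2) : ℝ) : EReal) ∧
    -- ... and is attained at the `Q*` induced by `P`
    (∀ (qY1 : U1 × U2 → Y1 → ℝ) (qY2 : U1 × U2 → Y2 → ℝ)
       (qUU : U1 × U2 → ℝ) (qU2 : U2 → ℝ),
      IsChan qY1 → IsChan qY2 → IsPmf qUU → IsPmf qU2 →
      (∀ u : U1 × U2, 0 < bpUU pY p1 p2 u →
        ∀ y1, qY1 u y1 = bpUUY1 pY p1 p2 (u.1, u.2, y1) / bpUU pY p1 p2 u) →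
      (∀ u : U1 × U2, 0 < bpUU pY p1 p2 u →
        ∀ y2, qY2 u y2 = bpUUY2 pY p1 p2 (u.1, u.2, y2) / bpUU pY p1 p2 u) →
      (∀ u : U1 × U2, qUU u = bpUU pY p1 p2 u) → (∀ u2, qU2 u2 = bpU2m pY p2 u2) →
      FbPQE s1 s2 a pY p1 p2 qY1 qY2 qUU qU2
        = ((Fb s1 s2 a (btJoint pY p1 p2) : ℝ) : EReal)) ∧
    -- equality forces `Q` to agree with `Q*` wherever the induced probabilities are positive
    (∀ (qY1 : U1 × U2 → Y1 → ℝ) (qY2 : U1 × U2 → Y2 → ℝ)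
       (qUU : U1 × U2 → ℝ) (qU2 : U2 → ℝ),
      IsChan qY1 → IsChan qY2 → IsPmf qUU → IsPmf qU2 →
      FbPQE s1 s2 a pY p1 p2 qY1 qY2 qUU qU2
          = ((Fb s1 s2 a (btJoint pY p1 p2) : ℝ) : EReal) →
      ((0 < a → ∀ u : U1 × U2, 0 < bpUU pY p1 p2 u →
          ∀ y1, 0 < bpUUY1 pY p1 p2 (u.1, u.2, y1) →
            qY1 u y1 = bpUUY1 pY p1 p2 (u.1, u.2, y1) / bpUU pY p1 p2 u) ∧
       (a < 1 → ∀ u : U1 × U2, 0 < bpUU pY p1 p2 u →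
          ∀ y2, 0 < bpUUY2 pY p1 p2 (u.1, u.2, y2) →
            qY2 u y2 = bpUUY2 pY p1 p2 (u.1, u.2, y2) / bpUU pY p1 p2 u) ∧
       (∀ u : U1 × U2, 0 < bpUU pY p1 p2 u → qUU u = bpUU pY p1 p2 u) ∧
       (∀ u2, 0 < bpU2m pY p2 u2 → qU2 u2 = bpU2m pY p2 u2))) := by
  classical
  refine ⟨?_, ?_, ?_, ?_⟩
  · -- Part 1: KL decomposition and nonnegativity for strictly positive Q
    intro qY1 qY2 qUU qU2 hc1 hc2 hc3 hc4 hp1' hp2' hp3' hp4'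
    have hdec := FbPQ_decomp pY p1 p2 s1 s2 a ha0 ha1 hpY hp1 hp2 qY1 qY2 qUU qU2
      (fun _ u y1 _ => hp1' u y1) (fun _ u y2 _ => hp2' u y2) (fun u _ => hp3' u)
      (fun u2 _ => hp4' u2)
    refine ⟨hdec, ?_⟩
    have hge := FbPQ_ge pY p1 p2 s1 s2 a hs1 hs2 ha0 ha1 hpY hp1 hp2 qY1 qY2 qUU qU2
      hc1 hc2 hc3 hc4 (fun _ u y1 _ => hp1' u y1) (fun _ u y2 _ => hp2' u y2)
      (fun u _ => hp3' u) (fun u2 _ => hp4' u2)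
    linarith
  · -- Part 2: the infimum equals Fb
    apply le_antisymm
    · apply sInf_le
      refine ⟨fun u => if h : 0 < bpUU pY p1 p2 u then
          (fun y1 => bpUUY1 pY p1 p2 (u.1, u.2, y1) / bpUU pY p1 p2 u) else bpY1 pY,
        fun u => if h : 0 < bpUU pY p1 p2 u then
          (fun y2 => bpUUY2 pY p1 p2 (u.1, u.2, y2) / bpUU pY p1 p2 u) else bpY2 pY,
        bpUU pY p1 p2, bpU2m pY p2, ?_, ?_, bpUU_pmf pY p1 p2 hpY hp1 hp2,
        bpU2m_pmf pY p2 hpY hp2, ?_⟩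
      · intro u
        dsimp only
        split_ifs with h
        · refine ⟨fun y1 => div_nonneg (bpUUY1_nn pY p1 p2 hpY hp1 hp2 _) h.le, ?_⟩
          rw [← Finset.sum_div,
            show (∑ y1, bpUUY1 pY p1 p2 (u.1, u.2, y1)) = bpUU pY p1 p2 u from rfl,
            div_self h.ne']
        · exact bpY1_pmf pY hpY
      · intro u
        dsimp only
        split_ifs with h
        · refine ⟨fun y2 => div_nonneg (bpUUY2_nn pY p1 p2 hpY hp1 hp2 _) h.le, ?_⟩
          rw [← Finset.sum_div,
            show (∑ y2, bpUUY2 pY p1 p2 (u.1, u.2, y2)) = bpUU pY p1 p2 u from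
              margP2fact pY p1 p2 u.1 u.2,
            div_self h.ne']
        · exact bpY2_pmf pY hpY
      · exact (FbPQE_attain pY p1 p2 s1 s2 a hpY hp1 hp2 _ _ _ _
          (fun u h y1 => by rw [dif_pos h])
          (fun u h y2 => by rw [dif_pos h])
          (fun _ => rfl) (fun _ => rfl)).symm
    · refine le_sInf ?_
      rintro v ⟨qY1, qY2, qUU, qU2, hc1, hc2, hc3, hc4, rfl⟩
      rcases Classical.em (∃ u1 u2 y1, 0 < a * bpUUY1 pY p1 p2 (u1, u2, y1)
          ∧ qY1 (u1, u2) y1 = 0) with h1 | h1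
      · rw [FbPQE_top pY p1 p2 s1 s2 a qY1 qY2 qUU qU2 (Or.inr (Or.inl h1))]
        exact le_top
      rcases Classical.em (∃ u1 u2 y2, 0 < (1 - a) * bpUUY2 pY p1 p2 (u1, u2, y2)
          ∧ qY2 (u1, u2) y2 = 0) with h2 | h2
      · rw [FbPQE_top pY p1 p2 s1 s2 a qY1 qY2 qUU qU2 (Or.inr (Or.inr (Or.inl h2)))]
        exact le_top
      rcases Classical.em (∃ u1 u2, 0 < s1 * bpUU pY p1 p2 (u1, u2)
          ∧ qUU (u1, u2) = 0) with h3 | h3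
      · rw [FbPQE_top pY p1 p2 s1 s2 a qY1 qY2 qUU qU2 (Or.inr (Or.inr (Or.inr h3)))]
        exact le_top
      rcases Classical.em (∃ u2, 0 < s2 * bpU2m pY p2 u2 ∧ qU2 u2 = 0) with h4 | h4
      · rw [FbPQE_top pY p1 p2 s1 s2 a qY1 qY2 qUU qU2 (Or.inl h4)]
        exact le_top
      simp only [not_exists] at h1 h2 h3 h4
      rw [FbPQE_eq_coe pY p1 p2 s1 s2 a qY1 qY2 qUU qU2 h4 h1 h2 h3,
        EReal.coe_le_coe_iff]
      exact FbPQ_ge pY p1 p2 s1 s2 a hs1 hs2 ha0 ha1 hpY hp1 hp2 qY1 qY2 qUU qU2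
        hc1 hc2 hc3 hc4 (hq1_of pY p1 p2 qY1 hc1 h1) (hq2_of pY p1 p2 qY2 hc2 h2)
        (hq3_of pY p1 p2 hs1 qUU hc3 h3) (hq4_of pY p2 hs2 qU2 hc4 h4)
  · -- Part 3: attainment
    intro qY1 qY2 qUU qU2 hc1 hc2 hc3 hc4 hA1 hA2 hA3 hA4
    exact FbPQE_attain pY p1 p2 s1 s2 a hpY hp1 hp2 qY1 qY2 qUU qU2 hA1 hA2 hA3 hA4
  · -- Part 4: equality forces agreement with Q*
    intro qY1 qY2 qUU qU2 hc1 hc2 hc3 hc4 heq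
    have H1 : ∀ u1 u2 y1, ¬(0 < a * bpUUY1 pY p1 p2 (u1, u2, y1)
        ∧ qY1 (u1, u2) y1 = 0) := by
      intro u1 u2 y1 hc
      have h := heq
      rw [FbPQE_top pY p1 p2 s1 s2 a qY1 qY2 qUU qU2
        (Or.inr (Or.inl ⟨u1, u2, y1, hc⟩))] at h
      exact (EReal.coe_ne_top _) h.symm
    have H2 : ∀ u1 u2 y2, ¬(0 < (1 - a) * bpUUY2 pY p1 p2 (u1, u2, y2)
        ∧ qY2 (u1, u2) y2 = 0) := by
      intro u1 u2 y2 hc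
      have h := heq
      rw [FbPQE_top pY p1 p2 s1 s2 a qY1 qY2 qUU qU2
        (Or.inr (Or.inr (Or.inl ⟨u1, u2, y2, hc⟩)))] at h
      exact (EReal.coe_ne_top _) h.symm
    have H3 : ∀ u1 u2, ¬(0 < s1 * bpUU pY p1 p2 (u1, u2) ∧ qUU (u1, u2) = 0) := by
      intro u1 u2 hc
      have h := heq
      rw [FbPQE_top pY p1 p2 s1 s2 a qY1 qY2 qUU qU2
        (Or.inr (Or.inr (Or.inr ⟨u1, u2, hc⟩)))] at h
      exact (EReal.coe_ne_top _) h.symm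
    have H4 : ∀ u2, ¬(0 < s2 * bpU2m pY p2 u2 ∧ qU2 u2 = 0) := by
      intro u2 hc
      have h := heq
      rw [FbPQE_top pY p1 p2 s1 s2 a qY1 qY2 qUU qU2 (Or.inl ⟨u2, hc⟩)] at h
      exact (EReal.coe_ne_top _) h.symm
    rw [FbPQE_eq_coe pY p1 p2 s1 s2 a qY1 qY2 qUU qU2 H4 H1 H2 H3,
      EReal.coe_eq_coe_iff] at heq
    exact eq_forces pY p1 p2 s1 s2 a hs1 hs2 ha0 ha1 hpY hp1 hp2 qY1 qY2 qUU qU2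
      hc1 hc2 hc3 hc4 (hq1_of pY p1 p2 qY1 hc1 H1) (hq2_of pY p1 p2 qY2 hc2 H2)
      (hq3_of pY p1 p2 hs1 qUU hc3 H3) (hq4_of pY p2 hs2 qU2 hc4 H4) heq
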